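/- arXiv:math/9801146 — 8 statements merged into one kernel-verified Lean document; each statement's English description precedes it below -/
import Mathlib

section
/- Let μ be a finite signed measure on ℝ. If Σ(μ) ≥ n for some n ≥ 1, then there exist real numbers a₁ ≤ b₁ < a₂ ≤ b₂ < ⋯ < a_{n+1} ≤ b_{n+1} such that the measures μ⁺ and μ⁻ alternately assign positive mass to the intervals [a_i, b_i]; i.e., either μ⁺([a₁,b₁]) > 0, μ⁻([a₂,b₂]) > 0, μ⁺([a₃,b₃]) > 0, … , or the same with the roles of μ⁺ and μ⁻ exchanged. -/
open MeasureTheory ENNReal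

noncomputable def altMeasure (p q : MeasureTheory.Measure ℝ) (n : ℕ) :
    MeasureTheory.Measure (Fin n → ℝ) :=
  MeasureTheory.Measure.pi (fun i => if Even (i : ℕ) then p else q)

def orderedSet (n : ℕ) : Set (Fin n → ℝ) := {x | StrictMono x}

noncomputable def sigmaPair (p q : MeasureTheory.Measure ℝ) : ℕ∞ :=
  ⨆ (n : ℕ) (_ : 0 < altMeasure p q (n+1) (orderedSet (n+1)) ∨
      0 < altMeasure q p (n+1) (orderedSet (n+1))), (n : ℕ∞)

/-- Number of zero-crossings of a finite signed measure. -/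
noncomputable def sigmaCross (μ : MeasureTheory.SignedMeasure ℝ) : ℕ∞ :=
  sigmaPair μ.toJordanDecomposition.posPart μ.toJordanDecomposition.negPart

/-- Core extraction lemma: if the alternating product measure of the set of strictly
increasing tuples is positive, we can find ordered closed rational-endpoint intervals
to which `p` and `q` alternately assign positive mass. -/
lemma core_extract (p q : MeasureTheory.Measure ℝ) [SigmaFinite p] [SigmaFinite q]
    (m : ℕ) (hm : 1 ≤ m)
    (hpos : 0 < altMeasure p q (m + 1) (orderedSet (m + 1))) :
    ∃ a b : Fin (m + 1) → ℝ,
      (∀ i, a i ≤ b i) ∧ (∀ i : Fin m, b i.castSucc < a i.succ) ∧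
      ∀ i : Fin (m + 1), 0 < (if Even (i : ℕ) then p else q) (Set.Icc (a i) (b i)) := by
  classical
  set ν : Fin (m + 1) → MeasureTheory.Measure ℝ :=
    fun i => if Even (i : ℕ) then p else q with hν
  haveI hsf : ∀ i, SigmaFinite (ν i) := by
    intro i; simp only [hν]; split <;> infer_instance
  have hpos' : 0 < MeasureTheory.Measure.pi ν (orderedSet (m + 1)) := hpos
  -- countable index of rational boxes
  let S := {st : (Fin (m + 1) → ℚ) × (Fin (m + 1) → ℚ) //
      ∀ i : Fin m, st.2 i.castSucc < st.1 i.succ}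
  let box : S → Set (Fin (m + 1) → ℝ) := fun st =>
    Set.univ.pi fun i => Set.Icc ((st.1.1 i : ℝ)) ((st.1.2 i : ℝ))
  have cover : orderedSet (m + 1) ⊆ ⋃ st : S, box st := by
    intro x hx
    have hne : (Finset.univ : Finset (Fin m)).Nonempty := ⟨⟨0, hm⟩, Finset.mem_univ _⟩
    set δ := (Finset.univ.inf' hne fun i : Fin m => x i.succ - x i.castSucc) / 3 with hδ
    have hδpos : 0 < δ := by
      apply div_pos _ (by norm_num)
      rw [Finset.lt_inf'_iff]
      intro i _
      have := hx (Fin.castSucc_lt_succ : i.castSucc < i.succ)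
      linarith
    have hgap : ∀ i : Fin m, 3 * δ ≤ x i.succ - x i.castSucc := by
      intro i
      have := Finset.inf'_le (fun i : Fin m => x i.succ - x i.castSucc)
        (Finset.mem_univ i)
      rw [hδ]; linarith
    have hs := fun j : Fin (m + 1) => exists_rat_btwn (show x j - δ < x j by linarith)
    choose s hs1 hs2 using hs
    have ht := fun j : Fin (m + 1) => exists_rat_btwn (show x j < x j + δ by linarith)
    choose t ht1 ht2 using ht
    have hcond : ∀ i : Fin m, t i.castSucc < s i.succ := by
      intro i
      have h1 : (t i.castSucc : ℝ) < x i.castSucc + δ := ht2 _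
      have h2 : x i.succ - δ < (s i.succ : ℝ) := hs1 _
      have h3 := hgap i
      exact_mod_cast show (t i.castSucc : ℝ) < (s i.succ : ℝ) by linarith
    refine Set.mem_iUnion.mpr ⟨⟨(s, t), hcond⟩, ?_⟩
    intro j _
    exact ⟨(hs2 j).le, (ht1 j).le⟩
  have hU : 0 < MeasureTheory.Measure.pi ν (⋃ st : S, box st) :=
    lt_of_lt_of_le hpos' (measure_mono cover)
  have hex : ∃ st : S, MeasureTheory.Measure.pi ν (box st) ≠ 0 := by
    by_contra hc
    push_neg at hc
    rw [measure_iUnion_null hc] at hU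
    exact lt_irrefl _ hU
  obtain ⟨⟨⟨s, t⟩, hcond⟩, hne0⟩ := hex
  have hbox : MeasureTheory.Measure.pi ν (box ⟨⟨s, t⟩, hcond⟩)
      = ∏ i, ν i (Set.Icc ((s i : ℝ)) ((t i : ℝ))) :=
    MeasureTheory.Measure.pi_pi ν _
  rw [hbox] at hne0
  have hfac : ∀ i : Fin (m + 1), 0 < ν i (Set.Icc ((s i : ℝ)) ((t i : ℝ))) := by
    intro i
    rw [pos_iff_ne_zero]
    exact Finset.prod_ne_zero_iff.mp hne0 i (Finset.mem_univ i)
  refine ⟨fun i => (s i : ℝ), fun i => (t i : ℝ), ?_, ?_, ?_⟩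
  · intro i
    by_contra h
    push_neg at h
    have := hfac i
    rw [Set.Icc_eq_empty h.not_ge, measure_empty] at this
    exact lt_irrefl _ this
  · intro i
    show ((t i.castSucc : ℚ) : ℝ) < ((s i.succ : ℚ) : ℝ)
    exact_mod_cast hcond i
  · exact hfac

/-- If `Σ(μ) ≥ n ≥ 1` then there are ordered closed intervals `[a i, b i]`, `i = 0, …, n`,
to which `μ⁺` and `μ⁻` alternately assign positive mass (starting with either `μ⁺` or `μ⁻`). -/
theorem stmt2 (μ : MeasureTheory.SignedMeasure ℝ) (n : ℕ) (hn : 1 ≤ n)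
    (hSig : (n : ℕ∞) ≤ sigmaCross μ) :
    ∃ a b : Fin (n + 1) → ℝ,
      (∀ i, a i ≤ b i) ∧
      (∀ i : Fin n, b i.castSucc < a i.succ) ∧
      ((∀ i : Fin (n + 1),
          0 < (if Even (i : ℕ) then μ.toJordanDecomposition.posPart
               else μ.toJordanDecomposition.negPart) (Set.Icc (a i) (b i))) ∨
       (∀ i : Fin (n + 1),
          0 < (if Even (i : ℕ) then μ.toJordanDecomposition.negPart
               else μ.toJordanDecomposition.posPart) (Set.Icc (a i) (b i)))) := by
  classical
  set p := μ.toJordanDecomposition.posPart with hp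
  set q := μ.toJordanDecomposition.negPart with hq
  -- extract an `m ≥ n` witnessing the supremum bound
  have hex : ∃ m : ℕ, n ≤ m ∧ (0 < altMeasure p q (m+1) (orderedSet (m+1)) ∨
      0 < altMeasure q p (m+1) (orderedSet (m+1))) := by
    by_contra hc
    push_neg at hc
    have hb : sigmaCross μ ≤ ((n - 1 : ℕ) : ℕ∞) := by
      rw [sigmaCross, sigmaPair]
      refine iSup₂_le fun m hPm => ?_
      have hmn : m < n := by
        by_contra h
        have hle0 := hc m (le_of_not_gt h)
        rcases hPm with h' | h'
        · exact hle0.1.not_gt h'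
        · exact hle0.2.not_gt h'
      exact_mod_cast Nat.le_sub_one_of_lt hmn
    have := hSig.trans hb
    have : n ≤ n - 1 := by exact_mod_cast this
    omega
  obtain ⟨m, hnm, hP⟩ := hex
  have hm1 : 1 ≤ m := le_trans hn hnm
  have hle : n + 1 ≤ m + 1 := by omega
  -- restriction map
  have restrict : ∀ (a b : Fin (m + 1) → ℝ),
      (∀ i, a i ≤ b i) → (∀ i : Fin m, b i.castSucc < a i.succ) →
      (∀ i, a (Fin.castLE hle i) ≤ b (Fin.castLE hle i)) ∧
      (∀ i : Fin n, b (Fin.castLE hle i.castSucc) < a (Fin.castLE hle i.succ)) := by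
    intro a b h1 h2
    refine ⟨fun i => h1 _, fun i => ?_⟩
    have e1 : Fin.castLE hle i.castSucc
        = Fin.castSucc (Fin.castLE (by omega : n ≤ m) i) := by
      apply Fin.ext; simp
    have e2 : Fin.castLE hle i.succ
        = Fin.succ (Fin.castLE (by omega : n ≤ m) i) := by
      apply Fin.ext; simp
    rw [e1, e2]
    exact h2 _
  rcases hP with hP | hP
  · obtain ⟨a, b, h1, h2, h3⟩ := core_extract p q m hm1 hP
    obtain ⟨h1', h2'⟩ := restrict a b h1 h2
    refine ⟨fun i => a (Fin.castLE hle i), fun i => b (Fin.castLE hle i), h1', h2', Or.inl ?_⟩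
    intro i
    have := h3 (Fin.castLE hle i)
    simpa using this
  · obtain ⟨a, b, h1, h2, h3⟩ := core_extract q p m hm1 hP
    obtain ⟨h1', h2'⟩ := restrict a b h1 h2
    refine ⟨fun i => a (Fin.castLE hle i), fun i => b (Fin.castLE hle i), h1', h2', Or.inr ?_⟩
    intro i
    have := h3 (Fin.castLE hle i)
    simpa using this
end

section
/- For a non-zero finite signed measure μ on ℝ, the number of zero-crossings Σ(μ) equals the supremum of the set of n ∈ ℕ for which there exist continuous, nonnegative, compactly supported functions g₁, …, g_{n+1} on ℝ such that (a) for i < j, g_i(x) > 0 and g_j(y) > 0 imply x < y, and (b) (∫ g_k dμ)(∫ g_{k+1} dμ) < 0 for 1 ≤ k ≤ n (with the convention sup ∅ = 0). -/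
open MeasureTheory ENNReal

/-- Integral of a function against a finite signed measure: `∫ g dμ⁺ - ∫ g dμ⁻`. -/
noncomputable def sInt (μ : MeasureTheory.SignedMeasure ℝ) (g : ℝ → ℝ) : ℝ :=
  (∫ x, g x ∂μ.toJordanDecomposition.posPart) - (∫ x, g x ∂μ.toJordanDecomposition.negPart)

section Aux

open Set

/-- A bump function concentrated where `p` lives, inside a given open set. -/
lemma crossAux_bump (p q : Measure ℝ) [IsFiniteMeasure p] [IsFiniteMeasure q]
    (hpq : p ⟂ₘ q) (U : Set ℝ) (hU : IsOpen U) (hpU : p U ≠ 0) :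
    ∃ g : ℝ → ℝ, Continuous g ∧ (∀ x, 0 ≤ g x) ∧ HasCompactSupport g ∧
      (∀ x, 0 < g x → x ∈ U) ∧ 0 < (∫ x, g x ∂p) - ∫ x, g x ∂q := by
  obtain ⟨s, hs, hps, hqs⟩ := hpq
  set A : Set ℝ := U \ s with hA
  have hAm : MeasurableSet A := hU.measurableSet.diff hs
  have hpA : p A = p U := measure_diff_null hps
  have hqA : q A = 0 := measure_mono_null (diff_subset_compl U s) hqs
  obtain ⟨K, hKA, hKc, hK⟩ := hAm.exists_isCompact_lt_add (measure_ne_top p A)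
    (ε := p A) (by rwa [hpA])
  have hpK : p K ≠ 0 := by
    intro h; rw [h, zero_add] at hK; exact lt_irrefl _ hK
  have hqK : q K = 0 := measure_mono_null hKA hqA
  obtain ⟨V, hKV, hVo, hqV⟩ := Set.exists_isOpen_lt_of_lt K (p K)
    (by rw [hqK]; exact pos_iff_ne_zero.mpr hpK)
  set W := V ∩ U with hW
  have hWo : IsOpen W := hVo.inter hU
  have hKW : K ⊆ W := subset_inter hKV (hKA.trans diff_subset)
  have hqW : q W < p K := lt_of_le_of_lt (measure_mono inter_subset_left) hqV
  obtain ⟨g, hg1, hg0, hgc, hg01⟩ := exists_continuous_one_zero_of_isCompact hKc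
    hWo.isClosed_compl (disjoint_compl_right_iff_subset.mpr hKW)
  have hgsupp : ∀ x, x ∉ W → g x = 0 := fun x hx => hg0 hx
  refine ⟨g, g.continuous, fun x => (hg01 x).1, hgc, ?_, ?_⟩
  · intro x hx
    by_contra hxW
    rw [hgsupp x (fun h => hxW h.2)] at hx
    exact lt_irrefl _ hx
  · have hgint : ∀ (ρ : Measure ℝ) [IsFiniteMeasure ρ], Integrable g ρ := fun ρ _ =>
      g.continuous.integrable_of_hasCompactSupport hgc
    have h1 : (p K).toReal ≤ ∫ x, g x ∂p := by
      rw [← measureReal_def, ← integral_indicator_one hKc.measurableSet]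
      refine integral_mono ((integrable_indicator_iff hKc.measurableSet).2
        (integrableOn_const (measure_ne_top p K))) (hgint p) ?_
      intro x
      by_cases hx : x ∈ K
      · simp [indicator_of_mem hx, (hg1 hx : g x = 1)]
      · simp only [indicator_of_notMem hx]; exact (hg01 x).1
    have h2 : ∫ x, g x ∂q ≤ (q W).toReal := by
      rw [← measureReal_def, ← integral_indicator_one hWo.measurableSet]
      refine integral_mono (hgint q) ((integrable_indicator_iff hWo.measurableSet).2
        (integrableOn_const (measure_ne_top q W))) ?_
      intro x
      by_cases hx : x ∈ W
      · simp only [indicator_of_mem hx]; exact (hg01 x).2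
      · simp [indicator_of_notMem hx, hgsupp x hx]
    have h3 : (q W).toReal < (p K).toReal :=
      ENNReal.toReal_lt_toReal (measure_ne_top q W) (measure_ne_top p K) |>.mpr hqW
    linarith

lemma crossAux_posmeas (ρ : Measure ℝ) (g : ℝ → ℝ) (hg : ∀ x, 0 ≤ g x)
    (h : 0 < ∫ x, g x ∂ρ) : ρ {x | 0 < g x} ≠ 0 := by
  intro h0
  have hae : g =ᵐ[ρ] 0 := by
    refine measure_mono_null (fun x hx => ?_) h0
    simp only [Set.mem_setOf_eq] at hx ⊢
    exact lt_of_le_of_ne (hg x) (Ne.symm hx)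
  rw [integral_congr_ae hae] at h
  simp at h

lemma crossAux_back (p q : Measure ℝ) [IsFiniteMeasure p] [IsFiniteMeasure q] (n : ℕ)
    (g : Fin (n+1) → ℝ → ℝ)
    (hcont : ∀ k, Continuous (g k)) (hnn : ∀ k x, 0 ≤ g k x)
    (hord : ∀ i j : Fin (n + 1), i < j → ∀ x y : ℝ, 0 < g i x → 0 < g j y → x < y)
    (hsign : ∀ k : Fin (n+1), if Even (k : ℕ) then 0 < (∫ x, g k x ∂p) - ∫ x, g k x ∂q
      else (∫ x, g k x ∂p) - (∫ x, g k x ∂q) < 0) :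
    0 < altMeasure p q (n+1) (orderedSet (n+1)) := by
  set U : Fin (n+1) → Set ℝ := fun k => {x | 0 < g k x} with hU
  set m : Fin (n+1) → Measure ℝ := fun i => if Even (i : ℕ) then p else q with hm
  haveI : ∀ i, SigmaFinite (m i) := by
    intro i; rw [hm]; dsimp only; split <;> infer_instance
  have hUpos : ∀ k, m k (U k) ≠ 0 := by
    intro k
    have hs := hsign k
    by_cases hk : Even (k : ℕ)
    · simp only [hk, if_true] at hs ⊢
      simp only [hm, hk, if_true]
      have : 0 < ∫ x, g k x ∂p := by linarith [integral_nonneg (f := g k) (hnn k) (μ := q)]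
      exact crossAux_posmeas p (g k) (hnn k) this
    · simp only [hk, if_false] at hs
      simp only [hm, hk, if_false]
      have : 0 < ∫ x, g k x ∂q := by linarith [integral_nonneg (f := g k) (hnn k) (μ := p)]
      exact crossAux_posmeas q (g k) (hnn k) this
  have hbox : Set.univ.pi U ⊆ orderedSet (n+1) := by
    intro x hx i j hij
    exact hord i j hij (x i) (x j) (hx i (Set.mem_univ i)) (hx j (Set.mem_univ j))
  calc (0 : ℝ≥0∞) < ∏ k, m k (U k) := by
        rw [pos_iff_ne_zero, Ne, Finset.prod_eq_zero_iff]
        push_neg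
        exact fun k _ => hUpos k
    _ = altMeasure p q (n+1) (Set.univ.pi U) := (Measure.pi_pi m U).symm
    _ ≤ altMeasure p q (n+1) (orderedSet (n+1)) := measure_mono hbox

lemma crossAux_cover (n : ℕ) :
    orderedSet (n+1) ⊆ ⋃ (r : Fin (n+2) → ℚ),
      Set.univ.pi (fun k : Fin (n+1) => Set.Ioo ((r k.castSucc : ℝ)) (r k.succ)) := by
  intro x hx
  have hxm : StrictMono x := hx
  set B : ℝ := x (Fin.last n) + 1 with hB
  set w : Fin (n+3) → ℝ := Fin.cons (x 0 - 1) (Fin.snoc x B) with hw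
  have hwx : ∀ k : Fin (n+1), w k.castSucc.succ = x k := by
    intro k
    rw [hw, Fin.cons_succ, Fin.snoc_castSucc]
  have hwlt : ∀ j : Fin (n+2), w j.castSucc < w j.succ := by
    intro j
    induction j using Fin.cases with
    | zero =>
      have h2 : ((0 : Fin (n+2)).succ) = ((0:Fin (n+1)).castSucc.succ) := rfl
      have h1 : ((0 : Fin (n+2)).castSucc) = (0 : Fin (n+3)) := rfl
      rw [h1, h2, hwx, hw]
      simp
    | succ i =>
      have h1 : (i.succ.castSucc : Fin (n+3)) = i.castSucc.succ := (Fin.succ_castSucc i).symm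
      rw [h1, hwx]
      have h2 : w i.succ.succ = (Fin.snoc x B : Fin (n+2) → ℝ) i.succ := by
        rw [hw, Fin.cons_succ]
      rw [h2]
      induction i using Fin.lastCases with
      | last =>
        have : (Fin.last n).succ = Fin.last (n+1) := rfl
        rw [this, Fin.snoc_last, hB]
        linarith
      | cast m =>
        rw [Fin.succ_castSucc, Fin.snoc_castSucc]
        exact hxm (Fin.castSucc_lt_succ (i := m))
  have hr : ∀ j : Fin (n+2), ∃ r : ℚ, w j.castSucc < r ∧ (r : ℝ) < w j.succ := fun j =>
    exists_rat_btwn (hwlt j)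
  choose r hr1 hr2 using hr
  refine Set.mem_iUnion.mpr ⟨r, fun k _ => ?_⟩
  constructor
  · calc (r k.castSucc : ℝ) < w k.castSucc.succ := hr2 k.castSucc
      _ = x k := hwx k
  · calc x k = w k.castSucc.succ := (hwx k).symm
      _ = w k.succ.castSucc := by rw [Fin.succ_castSucc]
      _ < r k.succ := hr1 k.succ

lemma crossAux_fwd (p q : Measure ℝ) [IsFiniteMeasure p] [IsFiniteMeasure q]
    (hpq : p ⟂ₘ q) (n : ℕ)
    (h : 0 < altMeasure p q (n+1) (orderedSet (n+1))) :
    ∃ g : Fin (n+1) → ℝ → ℝ,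
      (∀ k, Continuous (g k) ∧ (∀ x, 0 ≤ g k x) ∧ HasCompactSupport (g k)) ∧
      (∀ i j : Fin (n + 1), i < j → ∀ x y : ℝ, 0 < g i x → 0 < g j y → x < y) ∧
      (∀ k : Fin (n+1), if Even (k : ℕ) then 0 < (∫ x, g k x ∂p) - ∫ x, g k x ∂q
        else (∫ x, g k x ∂p) - (∫ x, g k x ∂q) < 0) := by
  set m : Fin (n+1) → Measure ℝ := fun i => if Even (i : ℕ) then p else q with hm
  haveI hsf : ∀ i, SigmaFinite (m i) := by
    intro i; rw [hm]; dsimp only; split <;> infer_instance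
  have hbox : ∃ r : Fin (n+2) → ℚ, 0 < altMeasure p q (n+1)
      (Set.univ.pi (fun k : Fin (n+1) => Set.Ioo ((r k.castSucc : ℝ)) (r k.succ))) := by
    by_contra hcon
    push_neg at hcon
    have hz : ∀ r : Fin (n+2) → ℚ, altMeasure p q (n+1)
        (Set.univ.pi (fun k : Fin (n+1) => Set.Ioo ((r k.castSucc : ℝ)) (r k.succ))) = 0 :=
      fun r => le_antisymm (hcon r) zero_le
    have : altMeasure p q (n+1) (orderedSet (n+1)) = 0 := by
      refine le_antisymm ?_ zero_le
      calc altMeasure p q (n+1) (orderedSet (n+1)) ≤ altMeasure p q (n+1)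
            (⋃ (r : Fin (n+2) → ℚ), Set.univ.pi
              (fun k : Fin (n+1) => Set.Ioo ((r k.castSucc : ℝ)) (r k.succ))) :=
            measure_mono (crossAux_cover n)
        _ ≤ ∑' (r : Fin (n+2) → ℚ), altMeasure p q (n+1)
              (Set.univ.pi (fun k : Fin (n+1) => Set.Ioo ((r k.castSucc : ℝ)) (r k.succ))) :=
            measure_iUnion_le _
        _ = 0 := by simp only [hz, tsum_zero]
    rw [this] at h; exact lt_irrefl _ h
  obtain ⟨r, hr⟩ := hbox
  set I : Fin (n+1) → Set ℝ := fun k => Set.Ioo ((r k.castSucc : ℝ)) (r k.succ) with hI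
  have hprod : altMeasure p q (n+1) (Set.univ.pi I) = ∏ k, m k (I k) := Measure.pi_pi m I
  have hIk : ∀ k, m k (I k) ≠ 0 := by
    intro k
    rw [hprod, pos_iff_ne_zero, Ne, Finset.prod_eq_zero_iff] at hr
    push_neg at hr
    exact hr k (Finset.mem_univ k)
  have hrlt : ∀ k : Fin (n+1), (r k.castSucc : ℝ) < r k.succ := by
    intro k
    by_contra hc
    push_neg at hc
    have : I k = ∅ := Set.Ioo_eq_empty (by exact fun h => absurd hc (not_le.mpr h))
    exact hIk k (by rw [this]; exact measure_empty)
  have hrmono : StrictMono (fun j : Fin (n+2) => (r j : ℝ)) := by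
    rw [Fin.strictMono_iff_lt_succ]
    intro i
    exact hrlt i
  have hIord : ∀ i j : Fin (n+1), i < j → ∀ x y : ℝ, x ∈ I i → y ∈ I j → x < y := by
    intro i j hij x y hxi hyj
    have h1 : x < (r i.succ : ℝ) := hxi.2
    have h2 : (r j.castSucc : ℝ) < y := hyj.1
    have h3 : (r i.succ : ℝ) ≤ (r j.castSucc : ℝ) := by
      rcases eq_or_lt_of_le (show i.succ ≤ j.castSucc by
        have := Fin.lt_def.mp hij
        rw [Fin.le_def, Fin.val_succ, Fin.coe_castSucc]
        omega) with he | hl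
      · rw [he]
      · exact le_of_lt (hrmono hl)
    linarith
  have hbumps : ∀ k : Fin (n+1), ∃ g : ℝ → ℝ, Continuous g ∧ (∀ x, 0 ≤ g x) ∧
      HasCompactSupport g ∧ (∀ x, 0 < g x → x ∈ I k) ∧
      (if Even (k : ℕ) then 0 < (∫ x, g x ∂p) - ∫ x, g x ∂q
        else (∫ x, g x ∂p) - (∫ x, g x ∂q) < 0) := by
    intro k
    by_cases hk : Even (k : ℕ)
    · have hmk : m k = p := by rw [hm]; simp [hk]
      obtain ⟨g, h1, h2, h3, h4, h5⟩ := crossAux_bump p q hpq (I k) isOpen_Ioo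
        (by rw [← hmk]; exact hIk k)
      exact ⟨g, h1, h2, h3, h4, by simp only [hk, if_true]; exact h5⟩
    · have hmk : m k = q := by rw [hm]; simp [hk]
      obtain ⟨g, h1, h2, h3, h4, h5⟩ := crossAux_bump q p hpq.symm (I k) isOpen_Ioo
        (by rw [← hmk]; exact hIk k)
      exact ⟨g, h1, h2, h3, h4, by simp only [hk, if_false]; linarith⟩
  choose g hg1 hg2 hg3 hg4 hg5 using hbumps
  refine ⟨g, fun k => ⟨hg1 k, hg2 k, hg3 k⟩, ?_, hg5⟩
  intro i j hij x y hxi hyj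
  exact hIord i j hij x y (hg4 i x hxi) (hg4 j y hyj)

lemma crossAux_signs (n : ℕ) (s : Fin (n+2) → ℝ) (h0 : 0 < s 0)
    (halt : ∀ k : Fin (n+1), s k.castSucc * s k.succ < 0) :
    ∀ k : Fin (n+2), if Even (k : ℕ) then 0 < s k else s k < 0 := by
  intro k
  induction k using Fin.induction with
  | zero => simpa using h0
  | succ i ih =>
    have hp := halt i
    by_cases hi : Even (i.castSucc : ℕ)
    · simp only [hi, if_true] at ih
      have h1 : s i.succ < 0 := by nlinarith
      have h2 : ¬ Even ((i.succ : Fin (n+2)) : ℕ) := by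
        simp only [Fin.val_succ, Nat.even_add_one]
        simpa using hi
      rw [if_neg h2]; exact h1
    · simp only [hi, if_false] at ih
      have h1 : 0 < s i.succ := by nlinarith
      have h2 : Even ((i.succ : Fin (n+2)) : ℕ) := by
        simp only [Fin.val_succ, Nat.even_add_one]
        simpa using hi
      rw [if_pos h2]; exact h1

lemma crossAux_one (p q : Measure ℝ) [IsFiniteMeasure p] [IsFiniteMeasure q]
    (hp : p ≠ 0) : 0 < altMeasure p q 1 (orderedSet 1) := by
  set m : Fin 1 → Measure ℝ := fun i => if Even (i : ℕ) then p else q with hm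
  haveI : ∀ i, SigmaFinite (m i) := by
    intro i; rw [hm]; dsimp only; split <;> infer_instance
  have h1 : orderedSet 1 = Set.univ := by
    refine Set.eq_univ_of_forall (fun x => ?_)
    exact Subsingleton.strictMono x
  rw [h1]
  have h2 : altMeasure p q 1 Set.univ = ∏ i, m i Set.univ := Measure.pi_univ m
  rw [h2, Fin.prod_univ_one]
  have : m 0 = p := by rw [hm]; simp
  rw [this, pos_iff_ne_zero]
  intro h
  exact hp (Measure.measure_univ_eq_zero.mp h)

end Aux

/-- Lemma 2.2: for a nonzero finite signed measure `μ`, the number of zero-crossings `Σ(μ)`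
equals the supremum of those `n` for which there are continuous, nonnegative, compactly
supported test functions `g 0, …, g n` with ordered supports and alternating signs of
`∫ g k dμ`. -/
theorem stmt3 (μ : MeasureTheory.SignedMeasure ℝ) (hμ : μ ≠ 0) :
    sigmaCross μ =
      ⨆ (n : ℕ) (_ : ∃ g : Fin (n + 1) → ℝ → ℝ,
        (∀ k, Continuous (g k) ∧ (∀ x, 0 ≤ g k x) ∧ HasCompactSupport (g k)) ∧
        (∀ i j : Fin (n + 1), i < j → ∀ x y : ℝ, 0 < g i x → 0 < g j y → x < y) ∧
        (∀ k : Fin n, sInt μ (g k.castSucc) * sInt μ (g k.succ) < 0)), (n : ℕ∞) := by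
  set p := μ.toJordanDecomposition.posPart with hpdef
  set q := μ.toJordanDecomposition.negPart with hqdef
  have hpq : p ⟂ₘ q := μ.toJordanDecomposition.mutuallySingular
  have hsI : ∀ g : ℝ → ℝ, sInt μ g = (∫ x, g x ∂p) - ∫ x, g x ∂q := fun g => rfl
  have hiff : ∀ n : ℕ,
      (0 < altMeasure p q (n+1) (orderedSet (n+1)) ∨
       0 < altMeasure q p (n+1) (orderedSet (n+1))) ↔
      (∃ g : Fin (n + 1) → ℝ → ℝ,
        (∀ k, Continuous (g k) ∧ (∀ x, 0 ≤ g k x) ∧ HasCompactSupport (g k)) ∧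
        (∀ i j : Fin (n + 1), i < j → ∀ x y : ℝ, 0 < g i x → 0 < g j y → x < y) ∧
        (∀ k : Fin n, sInt μ (g k.castSucc) * sInt μ (g k.succ) < 0)) := by
    intro n
    constructor
    · rintro (h | h)
      · obtain ⟨g, hprops, hord, hsign⟩ := crossAux_fwd p q hpq n h
        refine ⟨g, hprops, hord, fun k => ?_⟩
        have h1 := hsign k.castSucc
        have h2 := hsign k.succ
        rw [hsI, hsI]
        by_cases hk : Even (k : ℕ)
        · rw [if_pos (by simpa using hk)] at h1
          rw [if_neg (by simp [Nat.even_add_one]; simpa using hk)] at h2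
          exact mul_neg_of_pos_of_neg h1 h2
        · rw [if_neg (by simpa using hk)] at h1
          rw [if_pos (by simp [Nat.even_add_one]; simpa using hk)] at h2
          exact mul_neg_of_neg_of_pos h1 h2
      · obtain ⟨g, hprops, hord, hsign⟩ := crossAux_fwd q p hpq.symm n h
        refine ⟨g, hprops, hord, fun k => ?_⟩
        have h1 := hsign k.castSucc
        have h2 := hsign k.succ
        rw [hsI, hsI]
        by_cases hk : Even (k : ℕ)
        · rw [if_pos (by simpa using hk)] at h1
          rw [if_neg (by simp [Nat.even_add_one]; simpa using hk)] at h2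
          exact mul_neg_of_neg_of_pos (by linarith) (by linarith)
        · rw [if_neg (by simpa using hk)] at h1
          rw [if_pos (by simp [Nat.even_add_one]; simpa using hk)] at h2
          exact mul_neg_of_pos_of_neg (by linarith) (by linarith)
    · intro hQ
      induction n with
      | zero =>
        by_cases hp0 : p = 0
        · refine Or.inr (crossAux_one q p ?_)
          intro hq0
          apply hμ
          have hJ := μ.toSignedMeasure_toJordanDecomposition
          have hp0' : μ.toJordanDecomposition.posPart = 0 := by rw [← hpdef]; exact hp0
          have hq0' : μ.toJordanDecomposition.negPart = 0 := by rw [← hqdef]; exact hq0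
          rw [← hJ, MeasureTheory.JordanDecomposition.toSignedMeasure]
          rw [MeasureTheory.Measure.toSignedMeasure_congr hp0',
            MeasureTheory.Measure.toSignedMeasure_congr hq0']
          simp [MeasureTheory.Measure.toSignedMeasure_zero]
        · exact Or.inl (crossAux_one p q hp0)
      | succ m _ =>
        obtain ⟨g, hprops, hord, hmul⟩ := hQ
        set s : Fin (m+2) → ℝ := fun k => sInt μ (g k) with hs
        have hmul' : ∀ k : Fin (m+1), s k.castSucc * s k.succ < 0 := hmul
        rcases lt_trichotomy (s 0) 0 with hneg | hzero | hpos
        · have hsg := crossAux_signs m (fun k => - s k) (by simpa using hneg)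
            (fun k => by simpa [neg_mul_neg] using hmul' k)
          refine Or.inr (crossAux_back q p (m+1) g (fun k => (hprops k).1)
            (fun k => (hprops k).2.1) hord (fun k => ?_))
          have := hsg k
          by_cases hk : Even (k : ℕ)
          · rw [if_pos hk] at this ⊢
            have hsk := hsI (g k)
            simp only [hs] at this
            linarith
          · rw [if_neg hk] at this ⊢
            have hsk := hsI (g k)
            simp only [hs] at this
            linarith
        · exfalso
          have h00 := hmul' 0
          have hc : (0 : Fin (m+1)).castSucc = (0 : Fin (m+2)) := rfl
          rw [hc, hzero, zero_mul] at h00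
          exact lt_irrefl _ h00
        · have hsg := crossAux_signs m s hpos hmul'
          refine Or.inl (crossAux_back p q (m+1) g (fun k => (hprops k).1)
            (fun k => (hprops k).2.1) hord (fun k => ?_))
          have := hsg k
          by_cases hk : Even (k : ℕ)
          · rw [if_pos hk] at this ⊢
            have hsk := hsI (g k)
            simp only [hs] at this
            linarith
          · rw [if_neg hk] at this ⊢
            have hsk := hsI (g k)
            simp only [hs] at this
            linarith
  unfold sigmaCross sigmaPair
  apply iSup_congr
  intro n
  exact iSup_congr_Prop (hiff n) (fun _ => rfl)
end

section
/- Let b be a sign sequence and let a be obtained from b by replacing a substring (a block of consecutive entries) of b that contains both a +1 and a −1 by either the empty substring or by a constant substring (all entries equal). Then σ(a) ≤ σ(b). -/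
/-- The number of sign changes `σ` of a sign sequence: the largest `k` such that there is a
(not necessarily consecutive) subsequence of length `k + 1` with all consecutive entries
distinct (`max ∅ = 0`), with `σ(∅) = -1`. -/
noncomputable def sigmaSeq (l : List ℤ) : ℤ :=
  if l = [] then -1
  else ((sSup {k : ℕ | ∃ s : List ℤ, s.Sublist l ∧ s.length = k + 1 ∧ s.Chain' (· ≠ ·)} : ℕ) : ℤ)

/-- If `a` is obtained from the sign sequence `b = p ++ m ++ s` by replacing a substring `m`
of `b` containing both a `+1` and a `-1` by either the empty substring or a constant substring
`m'`, then `σ(a) ≤ σ(b)`. -/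
theorem stmt5 (a b p m s : List ℤ) (hb : ∀ x ∈ b, x = 1 ∨ x = -1)
    (hbsplit : b = p ++ m ++ s) (hm1 : (1 : ℤ) ∈ m) (hm2 : (-1 : ℤ) ∈ m)
    (ha : a = p ++ s ∨
      ∃ m' : List ℤ, (∀ x ∈ m', x = 1 ∨ x = -1) ∧ (∃ c : ℤ, ∀ x ∈ m', x = c) ∧
        a = p ++ m' ++ s) :
    sigmaSeq a ≤ sigmaSeq b := by
  have hbne : b ≠ [] := by
    subst hbsplit
    rcases m with _ | ⟨x, m⟩
    · simp at hm1
    · simp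
  have key : ∀ t : List ℤ, t.Chain' (· ≠ ·) → t.Sublist a → t.Sublist b := by
    intro t hchain hta
    rcases ha with ha | ⟨m', hm'pm, ⟨c, hc⟩, ha⟩
    · subst ha; subst hbsplit
      exact hta.trans ((List.sublist_append_left p m).append (List.Sublist.refl s))
    · subst ha; subst hbsplit
      rw [List.append_assoc] at hta
      obtain ⟨t1, t23, rfl, ht1, ht23⟩ := List.sublist_append_iff.mp hta
      obtain ⟨t2, t3, rfl, ht2, ht3⟩ := List.sublist_append_iff.mp ht23
      have ht2m : t2.Sublist m := by
        match t2, ht2 with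
        | [], _ => exact List.nil_sublist m
        | [x], h =>
          have hx : x ∈ m' := h.subset (List.mem_singleton_self x)
          rcases hm'pm x hx with rfl | rfl
          · exact List.singleton_sublist.mpr hm1
          · exact List.singleton_sublist.mpr hm2
        | x :: y :: r, h =>
          exfalso
          have hinf : (x :: y :: r) <:+: (t1 ++ ((x :: y :: r) ++ t3)) := ⟨t1, t3, by simp⟩
          have hch2 := hchain.infix hinf
          have hxy : x ≠ y := (List.isChain_cons_cons.mp hch2).1
          have hx : x ∈ m' := h.subset (by simp)
          have hy : y ∈ m' := h.subset (by simp)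
          exact hxy ((hc x hx).trans (hc y hy).symm)
      rw [List.append_assoc]
      exact ht1.append (ht2m.append ht3)
  unfold sigmaSeq
  rw [if_neg hbne]
  by_cases haemp : a = []
  · rw [if_pos haemp]
    have : (0 : ℤ) ≤ ((sSup {k : ℕ | ∃ s : List ℤ, s.Sublist b ∧ s.length = k + 1 ∧
        s.Chain' (· ≠ ·)} : ℕ) : ℤ) := Int.natCast_nonneg _
    linarith
  · rw [if_neg haemp]
    have hsub : {k : ℕ | ∃ s : List ℤ, s.Sublist a ∧ s.length = k + 1 ∧ s.Chain' (· ≠ ·)} ⊆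
        {k : ℕ | ∃ s : List ℤ, s.Sublist b ∧ s.length = k + 1 ∧ s.Chain' (· ≠ ·)} := by
      rintro k ⟨t, hts, htl, htc⟩
      exact ⟨t, key t htc hts, htl, htc⟩
    have hbdd : BddAbove {k : ℕ | ∃ s : List ℤ, s.Sublist b ∧ s.length = k + 1 ∧
        s.Chain' (· ≠ ·)} := by
      refine ⟨b.length, ?_⟩
      rintro k ⟨t, hts, htl, -⟩
      have := hts.length_le
      omega
    have hne : {k : ℕ | ∃ s : List ℤ, s.Sublist a ∧ s.length = k + 1 ∧
        s.Chain' (· ≠ ·)}.Nonempty := by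
      refine ⟨0, [a.head haemp], ?_, rfl, List.isChain_singleton _⟩
      exact List.singleton_sublist.mpr (List.head_mem haemp)
    exact_mod_cast csSup_le_csSup hbdd hne hsub
end

section
/- Let ν = Σ_{i=1}^n ε_i δ_{x_i} be a nonzero finite signed integer-valued measure on ℝ, where ε_i ∈ {+1,−1}, x₁ ≤ x₂ ≤ ⋯ ≤ x_n, and x_i < x_{i+1} whenever ε_i ≠ ε_{i+1}. Then the number of zero-crossings Σ(ν) equals σ((ε₁,…,ε_n)), the number of sign changes in the sequence (ε₁,…,ε_n). -/
open MeasureTheory ENNReal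

lemma altMeasure_pos_iff (p q : Measure ℝ) [IsFiniteMeasure p] [IsFiniteMeasure q]
    (A B : Set ℝ) (hpA : ∀ a ∈ A, 0 < p {a}) (hqB : ∀ b ∈ B, 0 < q {b})
    (hpA' : p Aᶜ = 0) (hqB' : q Bᶜ = 0) (m : ℕ) :
    0 < altMeasure p q m (orderedSet m) ↔
      ∃ y : Fin m → ℝ, StrictMono y ∧ ∀ i : Fin m, y i ∈ (if Even (i:ℕ) then A else B) := by
  set μi : Fin m → Measure ℝ := fun i => if Even (i : ℕ) then p else q with hμi
  haveI : ∀ i, SigmaFinite (μi i) := by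
    intro i; simp only [hμi]; split_ifs <;> infer_instance
  set C : Fin m → Set ℝ := fun i => if Even (i : ℕ) then A else B with hC
  constructor
  · intro hpos
    by_contra hno
    have hsub : orderedSet m ⊆ ⋃ i, Function.eval i ⁻¹' (C i)ᶜ := by
      intro y hy
      by_contra hmem
      simp only [Set.mem_iUnion, not_exists, Set.mem_preimage, Set.mem_compl_iff, not_not] at hmem
      exact hno ⟨y, hy, fun i => by have := hmem i; simp only [hC] at this ⊢; split_ifs at this ⊢ <;> exact this⟩
    have hnull : altMeasure p q m (⋃ i, Function.eval i ⁻¹' (C i)ᶜ) = 0 := by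
      refine measure_iUnion_null fun i => ?_
      refine Measure.pi_eval_preimage_null _ ?_
      simp only [hμi, hC]; split_ifs <;> assumption
    have := measure_mono_null hsub hnull
    rw [altMeasure] at this hpos
    simp [this] at hpos
  · rintro ⟨y, hy, hyC⟩
    have h1 : altMeasure p q m {y} = ∏ i, μi i {y i} := by
      rw [← Set.univ_pi_singleton y, altMeasure, Measure.pi_pi]
    have h2 : 0 < ∏ i, μi i {y i} := by
      rw [CanonicallyOrderedAdd.prod_pos]
      intro i _
      have := hyC i
      simp only [hμi]
      split_ifs at this ⊢ with h
      · exact hpA _ this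
      · exact hqB _ this
    calc (0:ℝ≥0∞) < altMeasure p q m {y} := h1 ▸ h2
      _ ≤ altMeasure p q m (orderedSet m) := measure_mono (by intro z hz; simp at hz; subst hz; exact hy)

lemma exists_change (e : ℕ → ℤ) : ∀ {i j : ℕ}, i < j → e i ≠ e j →
    ∃ k, i ≤ k ∧ k < j ∧ e k ≠ e (k+1) := by
  intro i j
  induction j with
  | zero => omega
  | succ j ih =>
    intro hij hne
    by_cases h : e j = e (j+1)
    · rcases Nat.lt_or_ge i j with h' | h'
      · obtain ⟨k, hk1, hk2, hk3⟩ := ih h' (fun hc => hne (hc.trans h))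
        exact ⟨k, hk1, by omega, hk3⟩
      · have : i = j := by omega
        subst this
        exact absurd h hne
    · exact ⟨j, by omega, by omega, h⟩

lemma const_of_no_change (e : ℕ → ℤ) {i j : ℕ} (hij : i ≤ j)
    (h : ∀ k, i ≤ k → k < j → e k = e (k+1)) : e i = e j := by
  by_contra hne
  rcases Nat.lt_or_ge i j with h' | h'
  · obtain ⟨k, hk1, hk2, hk3⟩ := exists_change e h' hne
    exact hk3 (h k hk1 hk2)
  · exact hne (by rw [show i = j by omega])

lemma strict_of_sign_ne (e : ℕ → ℤ) (X : ℕ → ℝ) (hX : Monotone X)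
    (hsep : ∀ k, e k ≠ e (k+1) → X k < X (k+1)) {i j : ℕ} (hij : i < j)
    (hne : e i ≠ e j) : X i < X j := by
  obtain ⟨k, hk1, hk2, hk3⟩ := exists_change e hij hne
  calc X i ≤ X k := hX hk1
    _ < X (k+1) := hsep k hk3
    _ ≤ X j := hX (by omega)

lemma card_changes_ge (e : ℕ → ℤ) (N : ℕ) (hN : ∀ k, e k ≠ e (k+1) → k < N)
    [DecidablePred (fun k => e k ≠ e (k+1))]
    (m : ℕ) (j : Fin (m+1) → ℕ) (hj : StrictMono j)
    (halt : ∀ i : Fin m, e (j i.castSucc) ≠ e (j i.succ)) :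
    m ≤ ((Finset.range N).filter (fun k => e k ≠ e (k+1))).card := by
  have h : ∀ i : Fin m, ∃ k, j i.castSucc ≤ k ∧ k < j i.succ ∧ e k ≠ e (k+1) :=
    fun i => exists_change e (hj (Fin.castSucc_lt_succ (i := i))) (halt i)
  choose f hf1 hf2 hf3 using h
  have hmem : ∀ i ∈ (Finset.univ : Finset (Fin m)),
      f i ∈ (Finset.range N).filter (fun k => e k ≠ e (k+1)) :=
    fun i _ => Finset.mem_filter.2 ⟨Finset.mem_range.2 (hN _ (hf3 i)), hf3 i⟩
  have hinj : Set.InjOn f (Finset.univ : Finset (Fin m)) := by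
    intro a _ b _ hab
    by_contra hne
    rcases Ne.lt_or_gt hne with h' | h'
    · have hab' : (a:ℕ) < (b:ℕ) := h'
      have : f a < f b := lt_of_lt_of_le (hf2 a)
        (le_trans (hj.monotone (show a.succ ≤ b.castSucc by
          rw [Fin.le_def, Fin.val_succ, Fin.coe_castSucc]; omega)) (hf1 b))
      omega
    · have hab' : (b:ℕ) < (a:ℕ) := h'
      have : f b < f a := lt_of_lt_of_le (hf2 b)
        (le_trans (hj.monotone (show b.succ ≤ a.castSucc by
          rw [Fin.le_def, Fin.val_succ, Fin.coe_castSucc]; omega)) (hf1 a))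
      omega
  simpa using Finset.card_le_card_of_injOn f hmem hinj

lemma neg_of_ne (a b : ℤ) (ha : a = 1 ∨ a = -1) (hb : b = 1 ∨ b = -1) (h : a ≠ b) :
    b = -a := by rcases ha with h1|h1 <;> rcases hb with h2|h2 <;> omega

lemma exists_chain (e : ℕ → ℤ) (X : ℕ → ℝ) (he : ∀ k, e k = 1 ∨ e k = -1)
    (hX : Monotone X) (hsep : ∀ k, e k ≠ e (k+1) → X k < X (k+1))
    (N : ℕ) (hN : ∀ k, e k ≠ e (k+1) → k < N)
    [DecidablePred (fun k => e k ≠ e (k+1))] :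
    ∃ j : Fin (((Finset.range N).filter (fun k => e k ≠ e (k+1))).card + 1) → ℕ,
      StrictMono (fun i => X (j i)) ∧ ∀ i, e (j i) = e 0 * (-1)^(i:ℕ) := by
  classical
  set D := (Finset.range N).filter (fun k => e k ≠ e (k+1)) with hD
  set σ := D.card with hσ
  let φ : Fin σ ≃o {x // x ∈ D} := D.orderIsoOfFin rfl
  have hφchange : ∀ (t : Fin σ), e (φ t : ℕ) ≠ e ((φ t : ℕ)+1) :=
    fun t => (Finset.mem_filter.mp (φ t).2).2
  set j : Fin (σ+1) → ℕ := fun i => if h : (i:ℕ) = 0 then 0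
    else (φ ⟨(i:ℕ)-1, by have := i.isLt; omega⟩ : ℕ) + 1 with hj
  -- j at succ
  have hjsucc : ∀ (t : Fin σ), j t.succ = (φ t : ℕ) + 1 := by
    intro t
    rw [hj]
    simp only [Fin.val_succ]
    rw [dif_neg (by omega)]
    congr 2
  -- j castSucc ≤ φ t
  have hjle : ∀ (t : Fin σ), j t.castSucc ≤ (φ t : ℕ) := by
    intro t
    rw [hj]
    simp only [Fin.coe_castSucc]
    by_cases h0 : (t:ℕ) = 0
    · rw [dif_pos h0]; exact Nat.zero_le _
    · rw [dif_neg h0]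
      have : φ ⟨(t:ℕ)-1, by have := t.isLt; omega⟩ < φ t := by
        rw [OrderIso.lt_iff_lt, Fin.lt_def]
        simp only []
        omega
      have := Subtype.coe_lt_coe.2 this
      omega
  -- e constant on [j castSucc, φ t]
  have hconst : ∀ (t : Fin σ), e (j t.castSucc) = e (φ t : ℕ) := by
    intro t
    refine const_of_no_change e (hjle t) ?_
    intro c hc1 hc2
    by_contra hcc
    have hcD : c ∈ D := Finset.mem_filter.2 ⟨Finset.mem_range.2 (hN _ hcc), hcc⟩
    obtain ⟨s, hs⟩ : ∃ s : Fin σ, (φ s : ℕ) = c := by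
      obtain ⟨s, hs⟩ := φ.surjective ⟨c, hcD⟩
      exact ⟨s, congrArg Subtype.val hs⟩
    have hslt : (s:ℕ) < (t:ℕ) := by
      have : φ s < φ t := by rw [← Subtype.coe_lt_coe]; omega
      rw [OrderIso.lt_iff_lt, Fin.lt_def] at this
      exact this
    -- c ≥ j t.castSucc forces contradiction
    rw [hj] at hc1
    simp only [Fin.coe_castSucc] at hc1
    by_cases h0 : (t:ℕ) = 0
    · omega
    · rw [dif_neg h0] at hc1
      have hsle : φ s ≤ φ ⟨(t:ℕ)-1, by have := t.isLt; omega⟩ := by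
        rw [OrderIso.le_iff_le, Fin.le_def]
        simp only []
        omega
      have := Subtype.coe_le_coe.2 hsle
      omega
  -- consecutive facts
  have hstep : ∀ (t : Fin σ), X (j t.castSucc) < X (j t.succ) ∧ e (j t.succ) = - e (j t.castSucc) := by
    intro t
    constructor
    · calc X (j t.castSucc) ≤ X (φ t : ℕ) := hX (hjle t)
        _ < X ((φ t : ℕ)+1) := hsep _ (hφchange t)
        _ = X (j t.succ) := by rw [hjsucc t]
    · rw [hjsucc t, hconst t]
      exact neg_of_ne _ _ (he _) (he _) (hφchange t)
  refine ⟨j, ?_, ?_⟩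
  · rw [Fin.strictMono_iff_lt_succ]
    intro t
    exact (hstep t).1
  · intro i
    induction i using Fin.induction with
    | zero => simp [hj]
    | succ t ih =>
      rw [(hstep t).2, ih]
      simp [pow_succ]

lemma sm_sum_apply {ι : Type*} (t : Finset ι) (v : ι → SignedMeasure ℝ) (s : Set ℝ) :
    (∑ i ∈ t, v i) s = ∑ i ∈ t, v i s := by
  classical
  induction t using Finset.cons_induction with
  | empty => simp
  | cons a t ha ih => rw [Finset.sum_cons, Finset.sum_cons, VectorMeasure.add_apply, ih]

set_option maxHeartbeats 1000000 in
/-- For `ν = ∑ εᵢ δ_{xᵢ}` with `εᵢ = ±1`, `x` nondecreasing and strictly increasing across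
sign changes, the number of zero-crossings `Σ(ν)` equals the number of sign changes of
`(ε₁, …, ε_n)`. -/
theorem stmt7 (n : ℕ) (hn : 0 < n) (ε : Fin n → ℤ) (x : Fin n → ℝ)
    (hε : ∀ i, ε i = 1 ∨ ε i = -1) (hx : Monotone x)
    (hsep : ∀ (i : ℕ) (h : i + 1 < n),
      ε ⟨i, Nat.lt_of_succ_lt h⟩ ≠ ε ⟨i + 1, h⟩ →
      x ⟨i, Nat.lt_of_succ_lt h⟩ < x ⟨i + 1, h⟩) :
    sigmaCross (∑ i : Fin n, (ε i : ℝ) • (MeasureTheory.Measure.dirac (x i)).toSignedMeasure)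
      = ((Finset.univ.filter (fun i : Fin n =>
          ∃ h : (i : ℕ) + 1 < n, ε i ≠ ε ⟨(i : ℕ) + 1, h⟩)).card : ℕ∞) := by
  classical
  set e : ℕ → ℤ := fun k => ε ⟨min k (n-1), by omega⟩ with he_def
  set X : ℕ → ℝ := fun k => x ⟨min k (n-1), by omega⟩ with hX_def
  have heval : ∀ (k : ℕ) (hk : k < n), e k = ε ⟨k, hk⟩ := by
    intro k hk
    simp only [he_def]
    congr 1
    exact Fin.ext (by simp; omega)
  have hXval : ∀ (k : ℕ) (hk : k < n), X k = x ⟨k, hk⟩ := by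
    intro k hk
    simp only [hX_def]
    congr 1
    exact Fin.ext (by simp; omega)
  have he' : ∀ k, e k = 1 ∨ e k = -1 := fun k => hε _
  have hXmono : Monotone X := by
    intro a b hab
    exact hx (by simp [Fin.le_def]; omega)
  have hchangelt : ∀ k, e k ≠ e (k+1) → k < n-1 := by
    intro k h
    by_contra hc
    push_neg at hc
    refine h ?_
    simp only [he_def]
    congr 1
    exact Fin.ext (by simp; omega)
  have hsep' : ∀ k, e k ≠ e (k+1) → X k < X (k+1) := by
    intro k h
    have hk := hchangelt k h
    have hk1 : k + 1 < n := by omega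
    have hk0 : k < n := by omega
    rw [heval k hk0, heval (k+1) hk1] at h
    rw [hXval k hk0, hXval (k+1) hk1]
    exact hsep k hk1 h
  set σn := ((Finset.range (n-1)).filter (fun k => e k ≠ e (k+1))).card with hσn
  -- card equality
  have hσcard : (Finset.univ.filter (fun i : Fin n =>
      ∃ h : (i : ℕ) + 1 < n, ε i ≠ ε ⟨(i : ℕ) + 1, h⟩)).card = σn := by
    have hmem2 : ∀ (k : ℕ) (hk1 : k < n - 1) (hkn : k < n), e k ≠ e (k+1) →
        (⟨k, hkn⟩ : Fin n) ∈ Finset.univ.filter (fun i : Fin n =>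
          ∃ h : (i : ℕ) + 1 < n, ε i ≠ ε ⟨(i : ℕ) + 1, h⟩) := by
      intro k hk1 hkn hk2
      refine Finset.mem_filter.2 ⟨Finset.mem_univ _, ⟨(show k + 1 < n by omega), fun hc => hk2 ?_⟩⟩
      calc e k = ε ⟨k, hkn⟩ := heval _ _
        _ = ε ⟨k+1, by omega⟩ := hc
        _ = e (k+1) := (heval _ _).symm
    refine Finset.card_bij' (fun a _ => (a : ℕ)) (fun k hk => ⟨k, by
        have := Finset.mem_range.mp (Finset.mem_filter.mp hk).1; omega⟩) ?_ ?_ ?_ ?_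
    · intro a ha
      obtain ⟨h, hne⟩ := (Finset.mem_filter.mp ha).2
      refine Finset.mem_filter.2 ⟨Finset.mem_range.2 (show (a:ℕ) < n - 1 by omega), fun hc => hne ?_⟩
      calc ε a = ε ⟨(a:ℕ), a.isLt⟩ := by rw [Fin.eta]
        _ = e (a:ℕ) := (heval _ _).symm
        _ = e ((a:ℕ)+1) := hc
        _ = ε ⟨(a:ℕ)+1, h⟩ := heval _ h
    · intro k hk
      have hk1 := Finset.mem_range.mp (Finset.mem_filter.mp hk).1
      exact hmem2 k hk1 (by omega) (Finset.mem_filter.mp hk).2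
    · intro a _; exact Fin.ext rfl
    · intro k _; rfl
  -- sets
  set A : Set ℝ := X '' {k | e k = 1} with hA
  set B : Set ℝ := X '' {k | e k = -1} with hB
  set S : Finset (Fin n) := Finset.univ.filter (fun i => ε i = 1) with hS
  set T : Finset (Fin n) := Finset.univ.filter (fun i => ε i = -1) with hT
  have hAiff : ∀ a, a ∈ A ↔ ∃ i ∈ S, x i = a := by
    intro a
    constructor
    · rintro ⟨k, hk, rfl⟩
      exact ⟨⟨min k (n-1), by omega⟩, Finset.mem_filter.2 ⟨Finset.mem_univ _, hk⟩, rfl⟩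
    · rintro ⟨i, hi, rfl⟩
      refine ⟨(i:ℕ), ?_, ?_⟩
      · show e (i:ℕ) = 1
        rw [heval _ i.isLt, Fin.eta]
        exact (Finset.mem_filter.mp hi).2
      · rw [hXval _ i.isLt, Fin.eta]
  have hBiff : ∀ a, a ∈ B ↔ ∃ i ∈ T, x i = a := by
    intro a
    constructor
    · rintro ⟨k, hk, rfl⟩
      exact ⟨⟨min k (n-1), by omega⟩, Finset.mem_filter.2 ⟨Finset.mem_univ _, hk⟩, rfl⟩
    · rintro ⟨i, hi, rfl⟩
      refine ⟨(i:ℕ), ?_, ?_⟩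
      · show e (i:ℕ) = -1
        rw [heval _ i.isLt, Fin.eta]
        exact (Finset.mem_filter.mp hi).2
      · rw [hXval _ i.isLt, Fin.eta]
  have hAeq : A = ↑(S.image x) := by
    ext a; rw [hAiff a]; simp [Finset.mem_image]
  have hBeq : B = ↑(T.image x) := by
    ext a; rw [hBiff a]; simp [Finset.mem_image]
  have hAmeas : MeasurableSet A := by rw [hAeq]; exact (S.image x).measurableSet
  have hBmeas : MeasurableSet B := by rw [hBeq]; exact (T.image x).measurableSet
  set p : Measure ℝ := ∑ i ∈ S, Measure.dirac (x i) with hp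
  set q : Measure ℝ := ∑ i ∈ T, Measure.dirac (x i) with hq
  haveI hfinp : IsFiniteMeasure p := by
    refine ⟨?_⟩
    rw [hp, Measure.finset_sum_apply]
    exact ENNReal.sum_lt_top.2 fun i _ => by simp
  haveI hfinq : IsFiniteMeasure q := by
    refine ⟨?_⟩
    rw [hq, Measure.finset_sum_apply]
    exact ENNReal.sum_lt_top.2 fun i _ => by simp
  have hpA : ∀ a ∈ A, 0 < p {a} := by
    intro a ha
    obtain ⟨i, hi, rfl⟩ := (hAiff a).mp ha
    rw [hp, Measure.finset_sum_apply]
    calc (0:ℝ≥0∞) < 1 := by norm_num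
      _ = Measure.dirac (x i) {x i} := (Measure.dirac_apply_of_mem (Set.mem_singleton (x i))).symm
      _ ≤ ∑ j ∈ S, Measure.dirac (x j) {x i} :=
        Finset.single_le_sum (f := fun j => Measure.dirac (x j) {x i}) (fun _ _ => zero_le) hi
  have hqB : ∀ a ∈ B, 0 < q {a} := by
    intro a ha
    obtain ⟨i, hi, rfl⟩ := (hBiff a).mp ha
    rw [hq, Measure.finset_sum_apply]
    calc (0:ℝ≥0∞) < 1 := by norm_num
      _ = Measure.dirac (x i) {x i} := (Measure.dirac_apply_of_mem (Set.mem_singleton (x i))).symm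
      _ ≤ ∑ j ∈ T, Measure.dirac (x j) {x i} :=
        Finset.single_le_sum (f := fun j => Measure.dirac (x j) {x i}) (fun _ _ => zero_le) hi
  have hpA' : p Aᶜ = 0 := by
    rw [hp, Measure.finset_sum_apply]
    refine Finset.sum_eq_zero fun i hi => ?_
    rw [Measure.dirac_apply' _ hAmeas.compl]
    have : x i ∈ A := (hAiff _).mpr ⟨i, hi, rfl⟩
    simp [this]
  have hqB' : q Bᶜ = 0 := by
    rw [hq, Measure.finset_sum_apply]
    refine Finset.sum_eq_zero fun i hi => ?_
    rw [Measure.dirac_apply' _ hBmeas.compl]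
    have : x i ∈ B := (hBiff _).mpr ⟨i, hi, rfl⟩
    simp [this]
  -- disjointness
  have hdisj : ∀ (i j : Fin n), ε i = 1 → ε j = -1 → x i ≠ x j := by
    intro i j hi hj hxx
    have h1 : e (i:ℕ) ≠ e (j:ℕ) := by
      rw [heval _ i.isLt, heval _ j.isLt, Fin.eta, Fin.eta, hi, hj]; decide
    have hXij : X (i:ℕ) = X (j:ℕ) := by
      rw [hXval _ i.isLt, hXval _ j.isLt, Fin.eta, Fin.eta, hxx]
    rcases Nat.lt_or_ge (i:ℕ) (j:ℕ) with h' | h'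
    · exact absurd hXij (ne_of_lt (strict_of_sign_ne e X hXmono hsep' h' h1))
    · rcases Nat.lt_or_ge (j:ℕ) (i:ℕ) with h'' | h''
      · exact absurd hXij.symm (ne_of_lt (strict_of_sign_ne e X hXmono hsep' h'' h1.symm))
      · have : i = j := Fin.ext (by omega)
        rw [this, hj] at hi; omega
  have hsing : p ⟂ₘ q := by
    refine ⟨B, hBmeas, ?_, ?_⟩
    · rw [hp, Measure.finset_sum_apply]
      refine Finset.sum_eq_zero fun i hi => ?_
      rw [Measure.dirac_apply' _ hBmeas]
      have : x i ∉ B := by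
        intro hmem
        obtain ⟨j, hj, hxj⟩ := (hBiff _).mp hmem
        exact hdisj i j (Finset.mem_filter.mp hi).2 (Finset.mem_filter.mp hj).2 hxj.symm
      simp [this]
    · rw [hq, Measure.finset_sum_apply]
      refine Finset.sum_eq_zero fun i hi => ?_
      rw [Measure.dirac_apply' _ hBmeas.compl]
      have : x i ∈ B := (hBiff _).mpr ⟨i, hi, rfl⟩
      simp [this]
  set J : JordanDecomposition ℝ := ⟨p, q, hsing⟩ with hJ
  -- the signed measure equals J.toSignedMeasure
  have hμeq : (∑ i : Fin n, (ε i : ℝ) • (Measure.dirac (x i)).toSignedMeasure)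
      = J.toSignedMeasure := by
    have hJts : J.toSignedMeasure = p.toSignedMeasure - q.toSignedMeasure := rfl
    rw [hJts]
    ext s hs
    rw [sm_sum_apply, VectorMeasure.sub_apply,
      Measure.toSignedMeasure_apply_measurable hs, Measure.toSignedMeasure_apply_measurable hs,
      hp, hq, measureReal_def, measureReal_def, Measure.finset_sum_apply, Measure.finset_sum_apply,
      ENNReal.toReal_sum (fun i _ => measure_ne_top _ _),
      ENNReal.toReal_sum (fun i _ => measure_ne_top _ _)]
    rw [← Finset.sum_filter_add_sum_filter_not Finset.univ (fun i => ε i = 1)]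
    have hfilterT : Finset.univ.filter (fun i => ¬ ε i = 1) = T := by
      refine Finset.filter_congr fun i _ => ?_
      rcases hε i with h | h <;> simp [h]
    rw [hfilterT]
    have h1 : ∀ i ∈ S, ((ε i : ℝ) • (Measure.dirac (x i)).toSignedMeasure) s
        = ((Measure.dirac (x i)) s).toReal := by
      intro i hi
      rw [VectorMeasure.smul_apply, Measure.toSignedMeasure_apply_measurable hs, measureReal_def,
        (Finset.mem_filter.mp hi).2]
      simp
    have h2 : ∀ i ∈ T, ((ε i : ℝ) • (Measure.dirac (x i)).toSignedMeasure) s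
        = -((Measure.dirac (x i)) s).toReal := by
      intro i hi
      rw [VectorMeasure.smul_apply, Measure.toSignedMeasure_apply_measurable hs, measureReal_def,
        (Finset.mem_filter.mp hi).2]
      simp
    rw [Finset.sum_congr rfl h1, Finset.sum_congr rfl h2, Finset.sum_neg_distrib]
    ring
  have hJD : (∑ i : Fin n, (ε i : ℝ) • (Measure.dirac (x i)).toSignedMeasure).toJordanDecomposition = J := by
    rw [hμeq]
    exact JordanDecomposition.toJordanDecomposition_toSignedMeasure J
  rw [sigmaCross, hJD]
  have hpos : J.posPart = p := rfl
  have hneg : J.negPart = q := rfl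
  rw [hpos, hneg, hσcard]
  -- now: sigmaPair p q = σn
  -- lower bound : a chain of length σn + 1 exists
  have hchain : ∃ j : Fin (σn + 1) → ℕ,
      StrictMono (fun i => X (j i)) ∧ ∀ i, e (j i) = e 0 * (-1)^(i:ℕ) :=
    exists_chain e X he' hXmono hsep' (n-1) hchangelt
  obtain ⟨jc, hjc1, hjc2⟩ := hchain
  have hPσ : 0 < altMeasure p q (σn+1) (orderedSet (σn+1)) ∨
      0 < altMeasure q p (σn+1) (orderedSet (σn+1)) := by
    rcases he' 0 with h0 | h0
    · left
      refine (altMeasure_pos_iff p q A B hpA hqB hpA' hqB' (σn+1)).mpr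
        ⟨fun i => X (jc i), hjc1, fun i => ?_⟩
      by_cases hev : Even (i:ℕ)
      · rw [if_pos hev]
        exact ⟨jc i, by rw [Set.mem_setOf_eq, hjc2 i, h0, hev.neg_one_pow]; ring, rfl⟩
      · rw [if_neg hev]
        exact ⟨jc i, by rw [Set.mem_setOf_eq, hjc2 i, h0,
          (Nat.not_even_iff_odd.mp hev).neg_one_pow]; ring, rfl⟩
    · right
      refine (altMeasure_pos_iff q p B A hqB hpA hqB' hpA' (σn+1)).mpr
        ⟨fun i => X (jc i), hjc1, fun i => ?_⟩
      by_cases hev : Even (i:ℕ)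
      · rw [if_pos hev]
        exact ⟨jc i, by rw [Set.mem_setOf_eq, hjc2 i, h0, hev.neg_one_pow]; ring, rfl⟩
      · rw [if_neg hev]
        exact ⟨jc i, by rw [Set.mem_setOf_eq, hjc2 i, h0,
          (Nat.not_even_iff_odd.mp hev).neg_one_pow]; ring, rfl⟩
  -- upper bound
  have hbound : ∀ (M : ℕ) (j' : Fin (M+1) → ℕ), StrictMono (fun i => X (j' i)) →
      (∀ i : Fin M, e (j' i.castSucc) ≠ e (j' i.succ)) → M ≤ σn := by
    intro M j' hsm halt
    have hj'm : StrictMono j' := by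
      intro a b hab
      by_contra h
      push_neg at h
      exact absurd (hsm hab) (not_lt.2 (hXmono h))
    exact card_changes_ge e (n-1) hchangelt M j' hj'm halt
  have hub : ∀ M : ℕ, (0 < altMeasure p q (M+1) (orderedSet (M+1)) ∨
      0 < altMeasure q p (M+1) (orderedSet (M+1))) → M ≤ σn := by
    intro M hM
    rcases hM with hM | hM
    · obtain ⟨y, hy, hyC⟩ := (altMeasure_pos_iff p q A B hpA hqB hpA' hqB' (M+1)).mp hM
      have h : ∀ i : Fin (M+1), ∃ k, X k = y i ∧ (e k = if Even (i:ℕ) then 1 else -1) := by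
        intro i
        have := hyC i
        by_cases hev : Even (i:ℕ)
        · rw [if_pos hev] at this
          obtain ⟨k, hk1, hk2⟩ := this
          exact ⟨k, hk2, by rw [if_pos hev]; exact hk1⟩
        · rw [if_neg hev] at this
          obtain ⟨k, hk1, hk2⟩ := this
          exact ⟨k, hk2, by rw [if_neg hev]; exact hk1⟩
      choose j' hj1 hj2 using h
      refine hbound M j' ?_ ?_
      · have : (fun i => X (j' i)) = y := funext hj1
        rw [this]; exact hy
      · intro i
        rw [hj2, hj2, Fin.coe_castSucc, Fin.val_succ]
        by_cases hev : Even (i:ℕ)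
        · rw [if_pos hev, if_neg (by simp [Nat.even_add_one, hev])]
          decide
        · rw [if_neg hev, if_pos (by simp [Nat.even_add_one, hev])]
          decide
    · obtain ⟨y, hy, hyC⟩ := (altMeasure_pos_iff q p B A hqB hpA hqB' hpA' (M+1)).mp hM
      have h : ∀ i : Fin (M+1), ∃ k, X k = y i ∧ (e k = if Even (i:ℕ) then -1 else 1) := by
        intro i
        have := hyC i
        by_cases hev : Even (i:ℕ)
        · rw [if_pos hev] at this
          obtain ⟨k, hk1, hk2⟩ := this
          exact ⟨k, hk2, by rw [if_pos hev]; exact hk1⟩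
        · rw [if_neg hev] at this
          obtain ⟨k, hk1, hk2⟩ := this
          exact ⟨k, hk2, by rw [if_neg hev]; exact hk1⟩
      choose j' hj1 hj2 using h
      refine hbound M j' ?_ ?_
      · have : (fun i => X (j' i)) = y := funext hj1
        rw [this]; exact hy
      · intro i
        rw [hj2, hj2, Fin.coe_castSucc, Fin.val_succ]
        by_cases hev : Even (i:ℕ)
        · rw [if_pos hev, if_neg (by simp [Nat.even_add_one, hev])]
          decide
        · rw [if_neg hev, if_pos (by simp [Nat.even_add_one, hev])]
          decide
  -- conclude
  rw [sigmaPair]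
  refine le_antisymm (iSup₂_le fun M hM => ?_) ?_
  · exact_mod_cast hub M hM
  · exact le_iSup₂ (f := fun (M : ℕ) (_ : 0 < altMeasure p q (M+1) (orderedSet (M+1)) ∨
      0 < altMeasure q p (M+1) (orderedSet (M+1))) => (M : ℕ∞)) σn hPσ
end

section
/- Let f : ℝ → ℝ be a continuous integrable function and let μ be the signed measure with density f with respect to Lebesgue measure. Then Σ(μ) equals the number of zero-crossings of the function f, i.e., the supremum of n ∈ ℕ for which there exist x₁ < x₂ < ⋯ < x_{n+1} with f(x_i) f(x_{i+1}) < 0 for 1 ≤ i ≤ n (with sup ∅ = 0). -/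
open MeasureTheory ENNReal

noncomputable def pmAux (g : ℝ → ℝ) : MeasureTheory.Measure ℝ :=
  MeasureTheory.volume.withDensity (fun x => ENNReal.ofReal (g x))

lemma pmAux_null {g : ℝ → ℝ} {A : Set ℝ} (hA : MeasurableSet A)
    (h : ∀ y ∈ A, g y ≤ 0) : pmAux g A = 0 := by
  rw [pmAux, withDensity_apply _ hA]
  rw [setLIntegral_congr_fun_ae hA (Filter.Eventually.of_forall
    (fun y hy => (ofReal_eq_zero.2 (h y hy) : ENNReal.ofReal (g y) = (0:ℝ≥0∞))))]
  simp

lemma gen {n : ℕ} (g : Fin (n+1) → ℝ → ℝ) (hg : ∀ i, Continuous (g i))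
    (hgi : ∀ i, MeasureTheory.Integrable (g i) MeasureTheory.volume) :
    0 < MeasureTheory.Measure.pi (fun i => pmAux (g i)) (orderedSet (n+1)) ↔
      ∃ x : Fin (n+1) → ℝ, StrictMono x ∧ ∀ i, 0 < g i (x i) := by
  haveI h1 : ∀ i, IsFiniteMeasure (pmAux (g i)) := fun i =>
    isFiniteMeasure_withDensity_ofReal (hgi i).2
  haveI h2 : ∀ i, SigmaFinite (pmAux (g i)) := fun i => by
    haveI := h1 i; infer_instance
  constructor
  · intro hpos
    set S : Fin (n+1) → Set ℝ := fun i => {y | 0 < g i y} with hS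
    have hSo : ∀ i, IsOpen (S i) := fun i => isOpen_lt continuous_const (hg i)
    have hnull : ∀ i, pmAux (g i) (S i)ᶜ = 0 := fun i =>
      pmAux_null (hSo i).measurableSet.compl (fun y hy => not_lt.1 hy)
    have hz : MeasureTheory.Measure.pi (fun i => pmAux (g i))
        (⋃ i, {y : Fin (n+1) → ℝ | y i ∈ (S i)ᶜ}) = 0 := by
      refine measure_iUnion_null fun i => ?_
      have he : {y : Fin (n+1) → ℝ | y i ∈ (S i)ᶜ} =
          Set.pi Set.univ (Function.update (fun _ => Set.univ) i (S i)ᶜ) := by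
        ext y
        simp only [Set.mem_setOf_eq, Set.mem_pi, Set.mem_univ, forall_true_left]
        constructor
        · intro hy j
          by_cases hj : j = i
          · subst hj; simpa using hy
          · simp [Function.update_of_ne hj]
        · intro hy; simpa using hy i
      rw [he, Measure.pi_pi]
      refine Finset.prod_eq_zero (Finset.mem_univ i) ?_
      simp [hnull i]
    have hdiff : MeasureTheory.Measure.pi (fun i => pmAux (g i))
        (orderedSet (n+1) \ Set.pi Set.univ S) = 0 := by
      refine measure_mono_null ?_ hz
      intro y hy
      rcases hy with ⟨_, hy2⟩
      simp only [Set.mem_pi, Set.mem_univ, forall_true_left, not_forall] at hy2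
      obtain ⟨i, hi⟩ := hy2
      exact Set.mem_iUnion.2 ⟨i, hi⟩
    have hle := measure_le_inter_add_diff
      (μ := MeasureTheory.Measure.pi (fun i => pmAux (g i)))
      (orderedSet (n+1)) (Set.pi Set.univ S)
    rw [hdiff, add_zero] at hle
    have hpos' := lt_of_lt_of_le hpos hle
    obtain ⟨y, hy⟩ := nonempty_of_measure_ne_zero hpos'.ne'
    exact ⟨y, hy.1, fun i => hy.2 i (Set.mem_univ i)⟩
  · rintro ⟨x, hx, hsign⟩
    have hopen : ∀ i, ∃ ε > 0, ∀ y, |y - x i| < ε → 0 < g i y := by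
      intro i
      have ho : IsOpen {y | 0 < g i y} := isOpen_lt continuous_const (hg i)
      obtain ⟨ε, hε, hball⟩ := Metric.isOpen_iff.1 ho (x i) (hsign i)
      exact ⟨ε, hε, fun y hy => hball (by simpa [Real.dist_eq] using hy)⟩
    choose ε hε hball using hopen
    set F : Fin (n+1) × Fin (n+1) → ℝ := fun p =>
      min (if p.1 < p.2 then (x p.2 - x p.1)/3 else 1) (ε p.1) with hF
    have hne : (Finset.univ : Finset (Fin (n+1) × Fin (n+1))).Nonempty :=
      Finset.univ_nonempty
    set r : ℝ := Finset.univ.inf' hne F with hrdef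
    have hr : 0 < r := by
      rw [hrdef, Finset.lt_inf'_iff]
      intro p _
      refine lt_min ?_ (hε p.1)
      split
      · next h => have := hx h; linarith
      · norm_num
    have hrε : ∀ i, r ≤ ε i := fun i =>
      (Finset.inf'_le _ (Finset.mem_univ (i, i))).trans (min_le_right _ _)
    have hrg : ∀ i j : Fin (n+1), i < j → 3*r ≤ x j - x i := by
      intro i j hij
      have h1 : r ≤ F (i, j) := Finset.inf'_le _ (Finset.mem_univ (i, j))
      have h2 : F (i, j) ≤ (x j - x i)/3 := by
        rw [hF]; simp only [if_pos hij]; exact min_le_left _ _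
      linarith
    set I : Fin (n+1) → Set ℝ := fun i => Set.Ioo (x i - r) (x i + r) with hI
    have hIsub : Set.pi Set.univ I ⊆ orderedSet (n+1) := by
      intro y hy i j hij
      have h1 := hy i (Set.mem_univ i)
      have h2 := hy j (Set.mem_univ j)
      simp only [hI, Set.mem_Ioo] at h1 h2
      have := hrg i j hij
      linarith [h1.2, h2.1]
    refine lt_of_lt_of_le ?_ (measure_mono hIsub)
    rw [Measure.pi_pi]
    refine CanonicallyOrderedAdd.prod_pos.2 fun i _ => ?_
    simp only [pmAux]
    rw [withDensity_apply _ measurableSet_Ioo]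
    have hmeas : Measurable fun y => ENNReal.ofReal (g i y) :=
      ENNReal.measurable_ofReal.comp (hg i).measurable
    rw [lintegral_pos_iff_support hmeas]
    have hsupp : I i ⊆ Function.support fun y => ENNReal.ofReal (g i y) := by
      intro y hy
      simp only [hI, Set.mem_Ioo] at hy
      have : 0 < g i y := hball i y (by rw [abs_lt]; constructor <;> linarith [hy.1, hy.2, hrε i])
      simp [Function.mem_support, ofReal_eq_zero, not_le, this]
    calc (0:ℝ≥0∞) < MeasureTheory.volume.restrict (I i) (I i) := by
          rw [Measure.restrict_apply_self]
          simp only [hI, Real.volume_Ioo]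
          rw [ENNReal.ofReal_pos]; linarith
      _ ≤ _ := measure_mono hsupp

/-- For the signed measure with density a continuous integrable `f` with respect to Lebesgue
measure, `Σ(μ)` equals the number of zero-crossings of the function `f`. -/
theorem stmt9 (f : ℝ → ℝ) (hf : Continuous f)
    (hint : MeasureTheory.Integrable f (MeasureTheory.volume : MeasureTheory.Measure ℝ)) :
    sigmaCross ((MeasureTheory.volume : MeasureTheory.Measure ℝ).withDensityᵥ f) =
      ⨆ (n : ℕ) (_ : ∃ x : Fin (n + 1) → ℝ, StrictMono x ∧
        ∀ i : Fin n, f (x i.castSucc) * f (x i.succ) < 0), (n : ℕ∞) := by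
  haveI : IsFiniteMeasure (pmAux f) := isFiniteMeasure_withDensity_ofReal hint.2
  haveI : IsFiniteMeasure (pmAux (-f)) := isFiniteMeasure_withDensity_ofReal hint.neg.2
  have hmut : pmAux f ⟂ₘ pmAux (-f) := by
    refine ⟨{y | f y ≤ 0}, (isClosed_le hf continuous_const).measurableSet, ?_, ?_⟩
    · exact pmAux_null (isClosed_le hf continuous_const).measurableSet (fun y hy => hy)
    · refine pmAux_null (isClosed_le hf continuous_const).measurableSet.compl ?_
      intro y hy
      simp only [Set.mem_compl_iff, Set.mem_setOf_eq, not_le] at hy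
      simp only [Pi.neg_apply]
      linarith
  have hJ : SignedMeasure.toJordanDecomposition
        ((MeasureTheory.volume : MeasureTheory.Measure ℝ).withDensityᵥ f)
      = (⟨pmAux f, pmAux (-f), hmut⟩ : JordanDecomposition ℝ) := by
    apply SignedMeasure.toJordanDecomposition_eq
    rw [JordanDecomposition.toSignedMeasure]
    exact withDensityᵥ_eq_withDensity_pos_part_sub_withDensity_neg_part hint
  have hsc : sigmaCross ((MeasureTheory.volume : MeasureTheory.Measure ℝ).withDensityᵥ f) =
      sigmaPair (pmAux f) (pmAux (-f)) := by
    unfold sigmaCross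
    rw [hJ]
  rw [hsc]
  have key1 : ∀ n : ℕ, (0 < altMeasure (pmAux f) (pmAux (-f)) (n+1) (orderedSet (n+1)) ↔
      ∃ x : Fin (n+1) → ℝ, StrictMono x ∧
        ∀ i : Fin (n+1), 0 < (if Even (i:ℕ) then f else -f) (x i)) := by
    intro n
    have hmeq : altMeasure (pmAux f) (pmAux (-f)) (n+1) =
        Measure.pi (fun i : Fin (n+1) => pmAux (if Even (i:ℕ) then f else -f)) := by
      unfold altMeasure
      congr 1
      funext i
      split <;> rfl
    rw [hmeq]
    exact gen _ (fun i => by split <;> [exact hf; exact hf.neg])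
      (fun i => by split <;> [exact hint; exact hint.neg])
  have key2 : ∀ n : ℕ, (0 < altMeasure (pmAux (-f)) (pmAux f) (n+1) (orderedSet (n+1)) ↔
      ∃ x : Fin (n+1) → ℝ, StrictMono x ∧
        ∀ i : Fin (n+1), 0 < (if Even (i:ℕ) then -f else f) (x i)) := by
    intro n
    have hmeq : altMeasure (pmAux (-f)) (pmAux f) (n+1) =
        Measure.pi (fun i : Fin (n+1) => pmAux (if Even (i:ℕ) then -f else f)) := by
      unfold altMeasure
      congr 1
      funext i
      split <;> rfl
    rw [hmeq]
    exact gen _ (fun i => by split <;> [exact hf.neg; exact hf])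
      (fun i => by split <;> [exact hint.neg; exact hint])
  unfold sigmaPair
  refine le_antisymm (iSup_le fun n => iSup_le fun hcond => ?_)
    (iSup_le fun n => iSup_le fun hex => ?_)
  · -- measures to crossings
    have hex : ∃ x : Fin (n + 1) → ℝ, StrictMono x ∧
        ∀ i : Fin n, f (x i.castSucc) * f (x i.succ) < 0 := by
      rcases hcond with h | h
      · obtain ⟨x, hx, hs⟩ := (key1 n).1 h
        refine ⟨x, hx, fun i => ?_⟩
        have h1 := hs i.castSucc
        have h2 := hs i.succ
        rw [Fin.coe_castSucc] at h1
        rw [Fin.val_succ] at h2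
        by_cases hpar : Even (i : ℕ)
        · rw [if_pos hpar] at h1
          rw [if_neg (by simpa [Nat.even_add_one] using hpar)] at h2
          simp only [Pi.neg_apply] at h2
          nlinarith
        · rw [if_neg hpar] at h1
          rw [if_pos (by simpa [Nat.even_add_one] using hpar)] at h2
          simp only [Pi.neg_apply] at h1
          nlinarith
      · obtain ⟨x, hx, hs⟩ := (key2 n).1 h
        refine ⟨x, hx, fun i => ?_⟩
        have h1 := hs i.castSucc
        have h2 := hs i.succ
        rw [Fin.coe_castSucc] at h1
        rw [Fin.val_succ] at h2
        by_cases hpar : Even (i : ℕ)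
        · rw [if_pos hpar] at h1
          rw [if_neg (by simpa [Nat.even_add_one] using hpar)] at h2
          simp only [Pi.neg_apply] at h1
          nlinarith
        · rw [if_neg hpar] at h1
          rw [if_pos (by simpa [Nat.even_add_one] using hpar)] at h2
          simp only [Pi.neg_apply] at h2
          nlinarith
    exact le_iSup_of_le n (le_iSup_of_le hex le_rfl)
  · -- crossings to measures
    match n with
    | 0 => simp
    | (m+1) =>
      obtain ⟨x, hx, hprod⟩ := hex
      set t : Fin (m+2) → ℝ := fun i => f (x i) * (if Even (i:ℕ) then 1 else -1) with ht
      have hstep : ∀ i : Fin (m+1), 0 < t i.castSucc * t i.succ := by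
        intro i
        have hp := hprod i
        simp only [ht]
        simp only [Fin.coe_castSucc, Fin.val_succ]
        by_cases hpar : Even (i : ℕ)
        · rw [if_pos hpar, if_neg (by simpa [Nat.even_add_one] using hpar)]
          nlinarith
        · rw [if_neg hpar, if_pos (by simpa [Nat.even_add_one] using hpar)]
          nlinarith
      have hzero : f (x (⟨0, by omega⟩ : Fin (m+2))) ≠ 0 := by
        have hp := hprod ⟨0, by omega⟩
        have : (⟨0, by omega⟩ : Fin (m+1)).castSucc = (⟨0, by omega⟩ : Fin (m+2)) := rfl
        rw [this] at hp
        intro h0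
        rw [h0] at hp
        simp at hp
      have ht0 : t ⟨0, by omega⟩ = f (x ⟨0, by omega⟩) := by
        rw [ht]; norm_num
      have hchain : ∀ k : ℕ, ∀ hk : k < m + 2, 0 < t ⟨0, by omega⟩ * t ⟨k, hk⟩ := by
        intro k
        induction k with
        | zero => intro hk; rw [ht0]; exact mul_self_pos.2 hzero
        | succ k ih =>
          intro hk
          have hk' : k < m + 1 := by omega
          have hs := hstep ⟨k, hk'⟩
          have hcs : (⟨k, hk'⟩ : Fin (m+1)).castSucc = (⟨k, Nat.lt_of_succ_lt hk⟩ : Fin (m+2)) := rfl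
          have hss : (⟨k, hk'⟩ : Fin (m+1)).succ = (⟨k+1, hk⟩ : Fin (m+2)) := rfl
          rw [hcs, hss] at hs
          have h0k := ih (Nat.lt_of_succ_lt hk)
          nlinarith [hs, h0k, sq_nonneg (t ⟨k, Nat.lt_of_succ_lt hk⟩)]
      have hall : ∀ i : Fin (m+2), 0 < t ⟨0, by omega⟩ * t i := by
        intro i
        have := hchain i.val i.isLt
        simpa using this
      by_cases hsgn : 0 < f (x ⟨0, by omega⟩)
      · have hcond : 0 < altMeasure (pmAux f) (pmAux (-f)) (m+1+1) (orderedSet (m+1+1)) := by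
          refine (key1 (m+1)).2 ⟨x, hx, fun i => ?_⟩
          have h1 := hall i
          rw [ht0] at h1
          simp only [ht] at h1
          by_cases hpar : Even (i : ℕ)
          · rw [if_pos hpar] at h1 ⊢
            nlinarith
          · rw [if_neg hpar] at h1 ⊢
            simp only [Pi.neg_apply]
            nlinarith
        exact le_iSup_of_le (m+1) (le_iSup_of_le (Or.inl hcond) le_rfl)
      · have hsgn' : f (x ⟨0, by omega⟩) < 0 := lt_of_le_of_ne (not_lt.1 hsgn) hzero
        have hcond : 0 < altMeasure (pmAux (-f)) (pmAux f) (m+1+1) (orderedSet (m+1+1)) := by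
          refine (key2 (m+1)).2 ⟨x, hx, fun i => ?_⟩
          have h1 := hall i
          rw [ht0] at h1
          simp only [ht] at h1
          by_cases hpar : Even (i : ℕ)
          · rw [if_pos hpar] at h1 ⊢
            simp only [Pi.neg_apply]
            nlinarith
          · rw [if_neg hpar] at h1 ⊢
            nlinarith
        exact le_iSup_of_le (m+1) (le_iSup_of_le (Or.inr hcond) le_rfl)
end

section
/- Let (μ_n)_{n≥1} be a sequence of finite signed measures on ℝ converging weakly to a finite signed measure μ, in the sense that ∫ g dμ_n → ∫ g dμ for every bounded continuous function g : ℝ → ℝ. Then Σ(μ) ≤ liminf_{n→∞} Σ(μ_n). -/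
open MeasureTheory ENNReal

open Filter Set

lemma myOrderedSet_isOpen (n : ℕ) : IsOpen (orderedSet n) := by
  have h : orderedSet n =
      ⋂ (i : Fin n) (j : Fin n) (_ : i < j), {x : Fin n → ℝ | x i < x j} := by
    ext x
    simp only [orderedSet, Set.mem_setOf_eq, Set.mem_iInter]
    exact ⟨fun h i j hij => h hij, fun h a b hab => h a b hab⟩
  rw [h]
  exact isOpen_iInter_of_finite fun i => isOpen_iInter_of_finite fun j =>
    isOpen_iInter_of_finite fun _ => isOpen_lt (continuous_apply i) (continuous_apply j)

lemma myExistsBox {n : ℕ} (ν : Fin (n+1) → Measure ℝ) [∀ i, SigmaFinite (ν i)]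
    (h : 0 < Measure.pi ν (orderedSet (n+1))) :
    ∃ a b : Fin (n+1) → ℚ,
      (Set.univ.pi fun i => Set.Ioo ((a i : ℝ)) ((b i : ℝ))) ⊆ orderedSet (n+1) ∧
      ∀ i, 0 < ν i (Set.Ioo ((a i : ℝ)) ((b i : ℝ))) := by
  by_contra hcon
  push_neg at hcon
  set S : Set ((Fin (n+1) → ℚ) × (Fin (n+1) → ℚ)) :=
    {r | (Set.univ.pi fun i => Set.Ioo ((r.1 i : ℝ)) ((r.2 i : ℝ))) ⊆ orderedSet (n+1)} with hS
  have hcover : orderedSet (n+1) ⊆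
      ⋃ r ∈ S, (Set.univ.pi fun i => Set.Ioo ((r.1 i : ℝ)) ((r.2 i : ℝ))) := by
    intro x hx
    obtain ⟨ε, hε, hball⟩ := Metric.isOpen_iff.1 (myOrderedSet_isOpen (n+1)) x hx
    have hball' : Metric.ball x ε = Set.univ.pi fun i => Metric.ball (x i) ε := ball_pi x hε
    choose a ha1 ha2 using fun i => exists_rat_btwn (show x i - ε < x i by linarith)
    choose b hb1 hb2 using fun i => exists_rat_btwn (show x i < x i + ε by linarith)
    have hsub : (Set.univ.pi fun i => Set.Ioo ((a i : ℝ)) ((b i : ℝ))) ⊆ orderedSet (n+1) := by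
      refine Set.Subset.trans ?_ hball
      rw [hball']
      intro y hy i _
      have hyi := hy i trivial
      simp only [Set.mem_Ioo] at hyi
      show y i ∈ Metric.ball (x i) ε
      rw [Real.ball_eq_Ioo]
      exact ⟨by linarith [ha1 i, hyi.1], by linarith [hb2 i, hyi.2]⟩
    refine Set.mem_biUnion (show (a, b) ∈ S from hsub) ?_
    intro i _
    exact ⟨ha2 i, hb1 i⟩
  have hnull : Measure.pi ν (orderedSet (n+1)) = 0 := by
    refine measure_mono_null hcover ?_
    refine (measure_biUnion_null_iff (S.to_countable)).2 ?_
    intro r hr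
    obtain ⟨i, hi⟩ := hcon r.1 r.2 hr
    rw [Measure.pi_pi]
    refine Finset.prod_eq_zero (Finset.mem_univ i) ?_
    simpa [not_lt, le_zero_iff] using hi
  exact absurd hnull h.ne'

lemma myPos (ν : Measure ℝ) {g : ℝ → ℝ} {I : Set ℝ} (hg0 : ∀ x, 0 ≤ g x)
    (hsupp : ∀ x, g x ≠ 0 → x ∈ I) (h : 0 < ∫ x, g x ∂ν) : 0 < ν I := by
  rcases eq_zero_or_pos (ν I) with h0 | h0
  · exfalso
    have hnull : ν {x | g x ≠ 0} = 0 :=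
      measure_mono_null (fun x hx => hsupp x hx) h0
    have hae : g =ᵐ[ν] 0 := by
      rw [Filter.EventuallyEq, ae_iff]
      simpa using hnull
    have : ∫ x, g x ∂ν = 0 := by
      rw [integral_congr_ae hae]; simp
    linarith
  · exact h0

lemma myBump (p q : Measure ℝ) [IsFiniteMeasure p] [IsFiniteMeasure q] (hpq : p ⟂ₘ q)
    {I : Set ℝ} (hI : IsOpen I) (hp : 0 < p I) :
    ∃ g : ℝ → ℝ, Continuous g ∧ (∀ x, 0 ≤ g x) ∧ (∀ x, |g x| ≤ 1) ∧
      (∀ x, g x ≠ 0 → x ∈ I) ∧ (∫ x, g x ∂q) < (∫ x, g x ∂p) := by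
  obtain ⟨s, hs, hps, hqs⟩ := hpq
  have hpI : 0 < p (I ∩ sᶜ) := by
    have hle : p I ≤ p (I ∩ sᶜ) + p s := by
      refine le_trans (measure_mono ?_) (measure_union_le _ _)
      intro x hx
      by_cases hxs : x ∈ s
      · exact Or.inr hxs
      · exact Or.inl ⟨hx, hxs⟩
    rw [hps, add_zero] at hle
    exact lt_of_lt_of_le hp hle
  have hmeas : MeasurableSet (I ∩ sᶜ) := hI.measurableSet.inter hs.compl
  obtain ⟨K, hKsub, hKclosed, hK⟩ :=
    hmeas.exists_isClosed_lt_add (measure_ne_top p _) hpI.ne'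
  have hpK : 0 < p K := by
    rcases eq_zero_or_pos (p K) with h0 | h0
    · rw [h0, zero_add] at hK; exact absurd hK (lt_irrefl _)
    · exact h0
  have hqK : q K = 0 :=
    measure_mono_null (fun x hx => (hKsub hx).2) hqs
  obtain ⟨U, hKU, hUopen, hU⟩ := K.exists_isOpen_lt_add (measure_ne_top q K) hpK.ne'
  rw [hqK, zero_add] at hU
  have hVopen : IsOpen (U ∩ I) := hUopen.inter hI
  have hKV : K ⊆ U ∩ I := fun x hx => ⟨hKU hx, (hKsub hx).1⟩
  have hqV : q (U ∩ I) < p K := lt_of_le_of_lt (measure_mono Set.inter_subset_left) hU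
  obtain ⟨f, hf0, hf1, hf01⟩ := exists_continuous_zero_one_of_isClosed
    hVopen.isClosed_compl hKclosed
    (Set.disjoint_left.2 fun x hx hxK => hx (hKV hxK))
  have habs : ∀ x, |f x| ≤ 1 :=
    fun x => abs_le.2 ⟨by linarith [(hf01 x).1], (hf01 x).2⟩
  have hint : ∀ (m : Measure ℝ) [IsFiniteMeasure m], Integrable (fun x => f x) m := by
    intro m _
    refine Integrable.mono' (integrable_const (1:ℝ)) f.continuous.aestronglyMeasurable ?_
    exact Filter.Eventually.of_forall fun x => by
      rw [Real.norm_eq_abs]; exact habs x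
  have h1 : (p K).toReal ≤ ∫ x, f x ∂p := by
    have hind : ∫ x, K.indicator (fun _ => (1:ℝ)) x ∂p = (p K).toReal := by
      rw [integral_indicator_const (1:ℝ) hKclosed.measurableSet]
      simp; rfl
    rw [← hind]
    refine integral_mono ((integrable_const 1).indicator hKclosed.measurableSet) (hint p) ?_
    intro x
    by_cases hx : x ∈ K
    · simp [Set.indicator_of_mem hx, hf1 hx]
    · simp [Set.indicator_of_notMem hx, (hf01 x).1]
  have h2 : ∫ x, f x ∂q ≤ (q (U ∩ I)).toReal := by
    have hind : ∫ x, (U ∩ I).indicator (fun _ => (1:ℝ)) x ∂q = (q (U ∩ I)).toReal := by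
      rw [integral_indicator_const (1:ℝ) hVopen.measurableSet]
      simp; rfl
    rw [← hind]
    refine integral_mono (hint q) ((integrable_const 1).indicator hVopen.measurableSet) ?_
    intro x
    by_cases hx : x ∈ U ∩ I
    · simp [Set.indicator_of_mem hx, (hf01 x).2]
    · simp [Set.indicator_of_notMem hx, (hf0 hx).le, hf0 hx]
  refine ⟨fun x => f x, f.continuous, fun x => (hf01 x).1, habs, ?_, ?_⟩
  · intro x hx
    by_contra hxI
    exact hx (hf0 (fun hV : x ∈ U ∩ I => hxI hV.2))
  · calc ∫ x, f x ∂q ≤ (q (U ∩ I)).toReal := h2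
      _ < (p K).toReal :=
        (ENNReal.toReal_lt_toReal (measure_ne_top q _) (measure_ne_top p _)).2 hqV
      _ ≤ ∫ x, f x ∂p := h1

lemma myKey (μs : ℕ → SignedMeasure ℝ) (μ : SignedMeasure ℝ)
    (hweak : ∀ g : ℝ → ℝ, Continuous g → (∃ C : ℝ, ∀ x, |g x| ≤ C) →
      Filter.Tendsto (fun n => sInt (μs n) g) Filter.atTop (nhds (sInt μ g)))
    (n : ℕ)
    (h : 0 < altMeasure μ.toJordanDecomposition.posPart μ.toJordanDecomposition.negPart
      (n+1) (orderedSet (n+1))) :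
    ∀ᶠ m in Filter.atTop,
      0 < altMeasure (μs m).toJordanDecomposition.posPart (μs m).toJordanDecomposition.negPart
        (n+1) (orderedSet (n+1)) := by
  haveI hsf : ∀ i : Fin (n+1), SigmaFinite
      ((fun i : Fin (n+1) => if Even (i:ℕ) then μ.toJordanDecomposition.posPart
        else μ.toJordanDecomposition.negPart) i) := by
    intro i
    by_cases hi : Even (i:ℕ) <;> simp only [hi, if_true, if_false] <;> infer_instance
  obtain ⟨a, b, hbox, hpos⟩ := myExistsBox
    (fun i : Fin (n+1) => if Even (i:ℕ) then μ.toJordanDecomposition.posPart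
      else μ.toJordanDecomposition.negPart) h
  have hg : ∀ k : Fin (n+1), ∃ g : ℝ → ℝ, Continuous g ∧ (∀ x, 0 ≤ g x) ∧ (∀ x, |g x| ≤ 1) ∧
      (∀ x, g x ≠ 0 → x ∈ Set.Ioo ((a k : ℝ)) ((b k : ℝ))) ∧
      (if Even (k:ℕ) then 0 < sInt μ g else sInt μ g < 0) := by
    intro k
    have hp := hpos k
    by_cases hk : Even (k:ℕ)
    · rw [if_pos hk] at hp
      obtain ⟨g, h1, h2, h3, h4, h5⟩ := myBump _ _ μ.toJordanDecomposition.mutuallySingular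
        isOpen_Ioo hp
      exact ⟨g, h1, h2, h3, h4, by rw [if_pos hk]; exact sub_pos.2 h5⟩
    · rw [if_neg hk] at hp
      obtain ⟨g, h1, h2, h3, h4, h5⟩ := myBump _ _ μ.toJordanDecomposition.mutuallySingular.symm
        isOpen_Ioo hp
      exact ⟨g, h1, h2, h3, h4, by rw [if_neg hk]; exact sub_neg.2 h5⟩
  choose g hgc hg0 hg1 hgsupp hgsign using hg
  have hev : ∀ᶠ m in Filter.atTop, ∀ k : Fin (n+1),
      if Even (k:ℕ) then 0 < sInt (μs m) (g k) else sInt (μs m) (g k) < 0 := by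
    rw [Filter.eventually_all]
    intro k
    have ht := hweak (g k) (hgc k) ⟨1, hg1 k⟩
    by_cases hk : Even (k:ℕ)
    · have hsk := hgsign k; rw [if_pos hk] at hsk
      filter_upwards [ht.eventually (eventually_gt_nhds hsk)] with m hm
      rw [if_pos hk]; exact hm
    · have hsk := hgsign k; rw [if_neg hk] at hsk
      filter_upwards [ht.eventually (eventually_lt_nhds hsk)] with m hm
      rw [if_neg hk]; exact hm
  filter_upwards [hev] with m hm
  haveI : ∀ i : Fin (n+1), SigmaFinite
      ((fun i : Fin (n+1) => if Even (i:ℕ) then (μs m).toJordanDecomposition.posPart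
        else (μs m).toJordanDecomposition.negPart) i) := by
    intro i
    by_cases hi : Even (i:ℕ) <;> simp only [hi, if_true, if_false] <;> infer_instance
  have hfac : ∀ k : Fin (n+1),
      0 < (if Even (k:ℕ) then (μs m).toJordanDecomposition.posPart
        else (μs m).toJordanDecomposition.negPart) (Set.Ioo ((a k : ℝ)) ((b k : ℝ))) := by
    intro k
    have hms := hm k
    have h0p : 0 ≤ ∫ x, g k x ∂(μs m).toJordanDecomposition.posPart :=
      integral_nonneg (hg0 k)
    have h0q : 0 ≤ ∫ x, g k x ∂(μs m).toJordanDecomposition.negPart :=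
      integral_nonneg (hg0 k)
    by_cases hk : Even (k:ℕ)
    · rw [if_pos hk] at hms ⊢
      unfold sInt at hms
      exact myPos _ (hg0 k) (hgsupp k) (by linarith)
    · rw [if_neg hk] at hms ⊢
      unfold sInt at hms
      exact myPos _ (hg0 k) (hgsupp k) (by linarith)
  refine lt_of_lt_of_le ?_ (measure_mono hbox)
  show 0 < Measure.pi _ _
  rw [Measure.pi_pi]
  exact CanonicallyOrderedAdd.prod_pos.2 fun i _ => hfac i

/-- Zero-crossings are lower semicontinuous along weak convergence: if `∫ g dμₙ → ∫ g dμ`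
for every bounded continuous `g`, then `Σ(μ) ≤ liminf Σ(μₙ)`. -/
theorem stmt10 (μs : ℕ → MeasureTheory.SignedMeasure ℝ) (μ : MeasureTheory.SignedMeasure ℝ)
    (hweak : ∀ g : ℝ → ℝ, Continuous g → (∃ C : ℝ, ∀ x, |g x| ≤ C) →
      Filter.Tendsto (fun n => sInt (μs n) g) Filter.atTop (nhds (sInt μ g))) :
    sigmaCross μ ≤ Filter.liminf (fun n => sigmaCross (μs n)) Filter.atTop := by
  unfold sigmaCross sigmaPair
  refine iSup₂_le fun n hn => ?_
  have hev : ∀ᶠ m in Filter.atTop, (n : ℕ∞) ≤ sigmaCross (μs m) := by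
    cases hn with
    | inl h =>
      filter_upwards [myKey μs μ hweak n h] with m hm
      exact le_iSup₂_of_le n (Or.inl hm) le_rfl
    | inr h =>
      have hweak' : ∀ g : ℝ → ℝ, Continuous g → (∃ C : ℝ, ∀ x, |g x| ≤ C) →
          Filter.Tendsto (fun m => sInt (-(μs m)) g) Filter.atTop (nhds (sInt (-μ) g)) := by
        intro g hg hb
        have hneg : ∀ ν : SignedMeasure ℝ, sInt (-ν) g = -(sInt ν g) := by
          intro ν
          unfold sInt
          rw [ν.toJordanDecomposition_neg, JordanDecomposition.neg_posPart,
            JordanDecomposition.neg_negPart]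
          ring
        simp only [hneg]
        exact (hweak g hg hb).neg
      have h' : 0 < altMeasure (-μ).toJordanDecomposition.posPart
          (-μ).toJordanDecomposition.negPart (n+1) (orderedSet (n+1)) := by
        rw [μ.toJordanDecomposition_neg, JordanDecomposition.neg_posPart,
          JordanDecomposition.neg_negPart]
        exact h
      filter_upwards [myKey (fun m => -(μs m)) (-μ) hweak' n h'] with m hm
      rw [(μs m).toJordanDecomposition_neg, JordanDecomposition.neg_posPart,
        JordanDecomposition.neg_negPart] at hm
      exact le_iSup₂_of_le n (Or.inr hm) le_rfl
  exact Filter.le_liminf_of_le (by isBoundedDefault) hev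
end

section
/- Let the random signed measure ν = Σ_{i=1}^n V_i δ_{X_i}, where (V_i, X_i) are i.i.d. with P(V₁=+1, X₁∈B) = μ⁺(B), P(V₁=−1, X₁∈B) = μ⁻(B) for mutually singular probability-normalized μ⁺, μ⁻ (μ⁺(ℝ)+μ⁻(ℝ)=1). Then almost surely Σ(ν) ≤ Σ(μ), where Σ denotes the number of zero-crossings of a finite signed measure. -/
open MeasureTheory ENNReal

section Aux

open Set

lemma orderedSet_measurable (m : ℕ) : MeasurableSet (orderedSet m) := by
  have : orderedSet m =
      ⋂ (i : Fin m) (j : Fin m) (_ : i < j), {x | x i < x j} := by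
    ext x; simp [orderedSet, StrictMono, Set.mem_iInter]
  rw [this]
  exact MeasurableSet.iInter fun i => MeasurableSet.iInter fun j => MeasurableSet.iInter
    fun _ => measurableSet_lt (measurable_pi_apply i) (measurable_pi_apply j)

lemma aux_pi_restrict {ι} [Fintype ι] {α : ι → Type*} [∀ i, MeasurableSpace (α i)]
    (μ : ∀ i, Measure (α i)) [∀ i, IsFiniteMeasure (μ i)]
    {B : ∀ i, Set (α i)} (hB : ∀ i, MeasurableSet (B i)) :
    Measure.pi (fun i => (μ i).restrict (B i)) = (Measure.pi μ).restrict (Set.pi univ B) := by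
  refine Measure.pi_eq fun s hs => ?_
  rw [Measure.restrict_apply (MeasurableSet.univ_pi hs), ← Set.pi_inter_distrib, Measure.pi_pi]
  exact Finset.prod_congr rfl fun i _ => (Measure.restrict_apply (hs i)).symm

lemma aux_map_pi {Ω : Type*} [MeasurableSpace Ω] (P : Measure Ω) [IsProbabilityMeasure P]
    {γ : Type*} [MeasurableSpace γ] (f : ℕ → Ω → γ) (hf : ∀ i, Measurable (f i))
    (hind : ProbabilityTheory.iIndepFun f P)
    {m : ℕ} (σ : Fin m → ℕ) (hσ : Function.Injective σ) :
    P.map (fun ω j => f (σ j) ω) = Measure.pi (fun j => P.map (f (σ j))) := by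
  haveI : ∀ j : Fin m, IsProbabilityMeasure (P.map (f (σ j))) :=
    fun j => Measure.isProbabilityMeasure_map (hf (σ j)).aemeasurable
  refine (Measure.pi_eq fun s hs => ?_).symm
  have hY : Measurable (fun ω (j : Fin m) => f (σ j) ω) :=
    measurable_pi_lambda _ fun j => hf (σ j)
  rw [Measure.map_apply hY (MeasurableSet.univ_pi hs)]
  have hpre : (fun ω (j : Fin m) => f (σ j) ω) ⁻¹' Set.pi univ s
      = ⋂ j, f (σ j) ⁻¹' s j := by
    ext ω; simp [Set.mem_pi]
  rw [hpre]
  classical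
  set sets : ℕ → Set γ := fun i => ⋂ (j : Fin m) (_ : σ j = i), s j with hsets
  have hsets_meas : ∀ i, MeasurableSet (sets i) := fun i =>
    MeasurableSet.iInter fun j => MeasurableSet.iInter fun _ => hs j
  have hsets_app : ∀ j, sets (σ j) = s j := by
    intro j
    apply Set.Subset.antisymm
    · intro x hx
      simp only [hsets, Set.mem_iInter] at hx
      exact hx j rfl
    · intro x hx
      simp only [hsets, Set.mem_iInter]
      intro j' hj'
      rwa [hσ hj']
  have key := hind.measure_inter_preimage_eq_mul (Finset.image σ Finset.univ)
    (sets := sets) (fun i _ => hsets_meas i)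
  have h1 : (⋂ i ∈ Finset.image σ Finset.univ, f i ⁻¹' sets i) = ⋂ j, f (σ j) ⁻¹' s j := by
    rw [Finset.set_biInter_finset_image]
    simp [hsets_app]
  have h2 : (∏ i ∈ Finset.image σ Finset.univ, P (f i ⁻¹' sets i))
      = ∏ j : Fin m, P (f (σ j) ⁻¹' s j) := by
    rw [Finset.prod_image (fun a _ b _ h => hσ h)]
    exact Finset.prod_congr rfl fun j _ => by rw [hsets_app]
  rw [h1, h2] at key
  rw [key]
  exact Finset.prod_congr rfl fun j _ =>
    (Measure.map_apply (hf (σ j)) (hs j)).symm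

/-- core law computation -/
lemma aux_law {Ω : Type*} [MeasurableSpace Ω] (P : Measure Ω) [IsProbabilityMeasure P]
    (V : ℕ → Ω → ℤ) (X : ℕ → Ω → ℝ)
    (hVmeas : ∀ i, Measurable (V i)) (hXmeas : ∀ i, Measurable (X i))
    (hindep : ProbabilityTheory.iIndepFun
      (fun i ω => (V i ω, X i ω)) P)
    {m : ℕ} (σ : Fin m → ℕ) (hσ : Function.Injective σ)
    (v : Fin m → ℤ) (μv : Fin m → Measure ℝ) [∀ j, IsFiniteMeasure (μv j)]
    (hfac : ∀ j (B : Set ℝ), MeasurableSet B →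
      P {ω | V (σ j) ω = v j ∧ X (σ j) ω ∈ B} = μv j B) :
    P {ω | (∀ j, V (σ j) ω = v j) ∧ StrictMono (fun j => X (σ j) ω)}
      = Measure.pi μv (orderedSet m) := by
  classical
  set f : ℕ → Ω → ℤ × ℝ := fun i ω => (V i ω, X i ω) with hf
  have hfm : ∀ i, Measurable (f i) := fun i => (hVmeas i).prodMk (hXmeas i)
  have hmap := aux_map_pi P f hfm hindep σ hσ
  haveI : ∀ j : Fin m, IsProbabilityMeasure (P.map (f (σ j))) :=
    fun j => Measure.isProbabilityMeasure_map (hfm (σ j)).aemeasurable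
  set η : Fin m → Measure (ℤ × ℝ) := fun j => P.map (f (σ j)) with hη
  set T : (Fin m → ℤ × ℝ) → (Fin m → ℝ) := fun y j => (y j).2 with hT
  have hTm : Measurable T := measurable_pi_lambda _ fun j =>
    measurable_snd.comp (measurable_pi_apply j)
  set B : Fin m → Set (ℤ × ℝ) := fun j => {v j} ×ˢ (univ : Set ℝ) with hB
  have hBm : ∀ j, MeasurableSet (B j) := fun j =>
    (measurableSet_singleton (v j)).prod MeasurableSet.univ
  set S : Set (Fin m → ℤ × ℝ) := T ⁻¹' (orderedSet m) ∩ Set.pi univ B with hS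
  have hSm : MeasurableSet S :=
    (hTm (orderedSet_measurable m)).inter (MeasurableSet.univ_pi hBm)
  have hY : Measurable (fun ω (j : Fin m) => f (σ j) ω) :=
    measurable_pi_lambda _ fun j => hfm (σ j)
  have hEv : {ω | (∀ j, V (σ j) ω = v j) ∧ StrictMono (fun j => X (σ j) ω)}
      = (fun ω (j : Fin m) => f (σ j) ω) ⁻¹' S := by
    ext ω
    simp only [hS, hB, hT, Set.mem_setOf_eq, Set.mem_preimage, Set.mem_inter_iff,
      Set.mem_pi, Set.mem_univ, forall_true_left, Set.mem_prod, Set.mem_singleton_iff,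
      and_true, orderedSet]
    tauto
  rw [hEv, ← Measure.map_apply hY hSm, hmap]
  -- now compute pi η S
  have h1 : Measure.pi η S = (Measure.pi η).restrict (Set.pi univ B) (T ⁻¹' (orderedSet m)) := by
    rw [Measure.restrict_apply (hTm (orderedSet_measurable m))]
  rw [h1, ← aux_pi_restrict η hBm]
  have h2 : Measure.pi (fun j => (η j).restrict (B j)) (T ⁻¹' orderedSet m)
      = (Measure.pi (fun j => (η j).restrict (B j))).map T (orderedSet m) := by
    rw [Measure.map_apply hTm (orderedSet_measurable m)]
  rw [h2]
  have h3 : (Measure.pi (fun j => (η j).restrict (B j))).map T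
      = Measure.pi (fun j => ((η j).restrict (B j)).map Prod.snd) := by
    exact (measurePreserving_pi (fun j => (η j).restrict (B j))
      (fun j => ((η j).restrict (B j)).map Prod.snd)
      (fun j => ⟨measurable_snd, rfl⟩)).map_eq
  rw [h3]
  refine congrArg (fun μ => μ (orderedSet m)) (congrArg Measure.pi (funext fun j => ?_))
  refine Measure.ext fun B' hB' => ?_
  rw [Measure.map_apply measurable_snd hB',
    Measure.restrict_apply (measurable_snd hB')]
  have : Prod.snd ⁻¹' B' ∩ B j = {v j} ×ˢ B' := by
    ext ⟨a, b⟩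
    simp only [hB, Set.mem_inter_iff, Set.mem_preimage, Set.mem_prod,
      Set.mem_singleton_iff, Set.mem_univ, and_true]
    tauto
  rw [this, hη]
  rw [Measure.map_apply (hfm (σ j)) ((measurableSet_singleton (v j)).prod hB')]
  rw [← hfac j B' hB']
  congr 1

lemma aux_pi_ordered_null {m : ℕ} (μs : Fin m → Measure ℝ) [∀ j, SigmaFinite (μs j)]
    (A : Fin m → Set ℝ) (h0 : ∀ j, μs j (A j)ᶜ = 0)
    (hno : ¬ ∃ y : Fin m → ℝ, StrictMono y ∧ ∀ j, y j ∈ A j) :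
    Measure.pi μs (orderedSet m) = 0 := by
  have hsub : orderedSet m ⊆ ⋃ j, Function.eval j ⁻¹' (A j)ᶜ := by
    intro y hy
    by_contra h
    simp only [Set.mem_iUnion, Set.mem_preimage, Function.eval, Set.mem_compl_iff,
      not_exists, not_not] at h
    exact hno ⟨y, hy, h⟩
  exact measure_mono_null hsub
    (measure_iUnion_null fun j => Measure.pi_eval_preimage_null _ (h0 j))

lemma aux_jordan_pos {a b : Measure ℝ} [IsFiniteMeasure a] [IsFiniteMeasure b]
    {E : Set ℝ} (hE : MeasurableSet E) :
    (a.toSignedMeasure - b.toSignedMeasure).toJordanDecomposition.posPart E ≤ a E := by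
  set s := a.toSignedMeasure - b.toSignedMeasure with hs
  obtain ⟨i, hi₁, hi₂, hi₃, hμ, hν⟩ := s.toJordanDecomposition_spec
  rw [hμ, SignedMeasure.toMeasureOfZeroLE_apply s hi₂ hi₁ hE]
  refine le_trans ?_ (measure_mono (Set.inter_subset_right : i ∩ E ⊆ E))
  rw [← ENNReal.coe_toNNReal (measure_ne_top a (i ∩ E)), ENNReal.coe_le_coe,
    ← NNReal.coe_le_coe, NNReal.coe_mk]
  have hval : s (i ∩ E) = (a (i ∩ E)).toReal - (b (i ∩ E)).toReal := by
    rw [hs, VectorMeasure.sub_apply,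
      Measure.toSignedMeasure_apply_measurable (hi₁.inter hE),
      Measure.toSignedMeasure_apply_measurable (hi₁.inter hE)]
    rfl
  have hcoe : ((a (i ∩ E)).toNNReal : ℝ) = (a (i ∩ E)).toReal := rfl
  rw [hcoe, hval]
  have := ENNReal.toReal_nonneg (a := b (i ∩ E))
  linarith

lemma aux_jordan_neg {a b : Measure ℝ} [IsFiniteMeasure a] [IsFiniteMeasure b]
    {E : Set ℝ} (hE : MeasurableSet E) :
    (a.toSignedMeasure - b.toSignedMeasure).toJordanDecomposition.negPart E ≤ b E := by
  set s := a.toSignedMeasure - b.toSignedMeasure with hs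
  obtain ⟨i, hi₁, hi₂, hi₃, hμ, hν⟩ := s.toJordanDecomposition_spec
  rw [hν, SignedMeasure.toMeasureOfLEZero_apply s hi₃ hi₁.compl hE]
  refine le_trans ?_ (measure_mono (Set.inter_subset_right : iᶜ ∩ E ⊆ E))
  rw [← ENNReal.coe_toNNReal (measure_ne_top b (iᶜ ∩ E)), ENNReal.coe_le_coe,
    ← NNReal.coe_le_coe, NNReal.coe_mk]
  have hval : s (iᶜ ∩ E) = (a (iᶜ ∩ E)).toReal - (b (iᶜ ∩ E)).toReal := by
    rw [hs, VectorMeasure.sub_apply,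
      Measure.toSignedMeasure_apply_measurable (hi₁.compl.inter hE),
      Measure.toSignedMeasure_apply_measurable (hi₁.compl.inter hE)]
    rfl
  have hcoe : ((b (iᶜ ∩ E)).toNNReal : ℝ) = (b (iᶜ ∩ E)).toReal := rfl
  rw [hcoe, hval]
  have := ENNReal.toReal_nonneg (a := a (iᶜ ∩ E))
  linarith

instance aux_finsum_finite {ι : Type*} (s : Finset ι) (μ : ι → Measure ℝ)
    [∀ i, IsFiniteMeasure (μ i)] : IsFiniteMeasure (∑ i ∈ s, μ i) := by
  constructor
  rw [Measure.finset_sum_apply]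
  exact ENNReal.sum_lt_top.2 fun i _ => measure_lt_top _ _

lemma aux_tsm_congr (μ' ν' : Measure ℝ) (h : μ' = ν')
    [IsFiniteMeasure μ'] [IsFiniteMeasure ν'] :
    μ'.toSignedMeasure = ν'.toSignedMeasure := by
  subst h; rfl

lemma aux_finsum_tsm {ι : Type*} (s : Finset ι) (μ : ι → Measure ℝ)
    [∀ i, IsFiniteMeasure (μ i)] :
    (∑ i ∈ s, μ i).toSignedMeasure = ∑ i ∈ s, (μ i).toSignedMeasure := by
  classical
  induction s using Finset.induction_on with
  | empty => simp [Measure.toSignedMeasure_zero]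
  | insert a t hni ih =>
    rw [aux_tsm_congr _ _ (Finset.sum_insert hni), Measure.toSignedMeasure_add, ih,
      Finset.sum_insert hni]

end Aux

open MeasureTheory in
/-- For `ν = ∑_{i<n} Vᵢ δ_{Xᵢ}` with `(Vᵢ, Xᵢ)` i.i.d. of law `δ₊₁ ⊗ μ⁺ + δ₋₁ ⊗ μ⁻`
(`μ⁺ ⟂ μ⁻`, `μ⁺(ℝ) + μ⁻(ℝ) = 1`), almost surely `Σ(ν) ≤ Σ(μ)`. -/
theorem stmt18 {Ω : Type*} {mΩ : MeasurableSpace Ω} (P : Measure Ω) [IsProbabilityMeasure P]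
    (V : ℕ → Ω → ℤ) (X : ℕ → Ω → ℝ) (p q : Measure ℝ)
    [IsFiniteMeasure p] [IsFiniteMeasure q]
    (hsing : p ⟂ₘ q) (hprob : p Set.univ + q Set.univ = 1)
    (hVmeas : ∀ i, Measurable (V i)) (hXmeas : ∀ i, Measurable (X i))
    (hindep : ProbabilityTheory.iIndepFun
      (fun i ω => (V i ω, X i ω)) P)
    (hlaw : ∀ i, ∀ B : Set ℝ, MeasurableSet B →
      P {ω | V i ω = 1 ∧ X i ω ∈ B} = p B ∧ P {ω | V i ω = -1 ∧ X i ω ∈ B} = q B)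
    (n : ℕ) :
    ∀ᵐ ω ∂P,
      sigmaCross (∑ i : Fin n, (V i ω : ℝ) • (Measure.dirac (X i ω)).toSignedMeasure) ≤
        sigmaCross (p.toSignedMeasure - q.toSignedMeasure) := by
  classical
  -- RHS identification
  have hRHS : sigmaCross (p.toSignedMeasure - q.toSignedMeasure) = sigmaPair p q := by
    have hj : (p.toSignedMeasure - q.toSignedMeasure).toJordanDecomposition =
        ({ posPart := p, negPart := q, mutuallySingular := hsing } : JordanDecomposition ℝ) := by
      rw [show p.toSignedMeasure - q.toSignedMeasure =
          ({ posPart := p, negPart := q, mutuallySingular := hsing } :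
            JordanDecomposition ℝ).toSignedMeasure from rfl]
      exact JordanDecomposition.toJordanDecomposition_toSignedMeasure _
    rw [sigmaCross, hj]
  rw [hRHS]
  -- atomic measures
  set ρ : ℤ → Ω → Measure ℝ :=
    fun v ω => ∑ i : Fin n, if V (↑i) ω = v then Measure.dirac (X (↑i) ω) else 0 with hρ
  haveI hρfin : ∀ v ω, IsFiniteMeasure (ρ v ω) := by
    intro v ω
    haveI : ∀ i : Fin n, IsFiniteMeasure (if V (↑i) ω = v then Measure.dirac (X (↑i) ω) else 0) :=
      fun i => by split <;> infer_instance
    infer_instance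
  set A : ℤ → Ω → Set ℝ := fun v ω => (fun i : Fin n => X (↑i) ω) '' {i | V (↑i) ω = v} with hA
  have hAmeas : ∀ v ω, MeasurableSet (A v ω) :=
    fun v ω => ((Set.toFinite _).image _).measurableSet
  have hρA : ∀ v ω, ρ v ω (A v ω)ᶜ = 0 := by
    intro v ω
    rw [hρ, Measure.finset_sum_apply]
    refine Finset.sum_eq_zero fun i _ => ?_
    by_cases h : V (↑i) ω = v
    · rw [if_pos h, Measure.dirac_apply' _ (hAmeas v ω).compl]
      refine Set.indicator_of_notMem ?_ _
      simp only [Set.mem_compl_iff, not_not]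
      exact ⟨i, h, rfl⟩
    · rw [if_neg h]
      simp
  -- decomposition of the empirical signed measure
  have hν : ∀ ω, (∀ i : Fin n, V (↑i) ω = 1 ∨ V (↑i) ω = -1) →
      (∑ i : Fin n, (V (↑i) ω : ℝ) • (Measure.dirac (X (↑i) ω)).toSignedMeasure)
        = (ρ 1 ω).toSignedMeasure - (ρ (-1) ω).toSignedMeasure := by
    intro ω hg
    haveI hIF : ∀ (v : ℤ) (i : Fin n),
        IsFiniteMeasure (if V (↑i) ω = v then Measure.dirac (X (↑i) ω) else 0) :=
      fun v i => by split <;> infer_instance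
    have e1 : (ρ 1 ω).toSignedMeasure
        = ∑ i : Fin n, (if V (↑i) ω = (1:ℤ) then Measure.dirac (X (↑i) ω) else 0).toSignedMeasure :=
      aux_finsum_tsm _ _
    have e2 : (ρ (-1) ω).toSignedMeasure
        = ∑ i : Fin n, (if V (↑i) ω = (-1:ℤ) then Measure.dirac (X (↑i) ω) else 0).toSignedMeasure :=
      aux_finsum_tsm _ _
    rw [e1, e2, ← Finset.sum_sub_distrib]
    refine Finset.sum_congr rfl fun i _ => ?_
    rcases hg i with h | h
    · rw [aux_tsm_congr _ _ (if_pos h), aux_tsm_congr _ _ (if_neg (show ¬ V (↑i) ω = -1 by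
        rw [h]; decide)), Measure.toSignedMeasure_zero, h]
      simp
    · rw [aux_tsm_congr _ _ (if_neg (show ¬ V (↑i) ω = 1 by
        rw [h]; decide)), aux_tsm_congr _ _ (if_pos h), Measure.toSignedMeasure_zero, h]
      simp
      exact neg_one_smul ℝ (Measure.dirac (X (↑i) ω)).toSignedMeasure
  -- bad events
  set Tpos : (m : ℕ) → Set Ω := fun m => ⋃ (σ : Fin m → Fin n),
    {ω | (∀ j : Fin m, V (↑(σ j)) ω = (if Even (j : ℕ) then 1 else -1)) ∧
      StrictMono fun j => X (↑(σ j)) ω} with hTpos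
  set Tneg : (m : ℕ) → Set Ω := fun m => ⋃ (σ : Fin m → Fin n),
    {ω | (∀ j : Fin m, V (↑(σ j)) ω = (if Even (j : ℕ) then -1 else 1)) ∧
      StrictMono fun j => X (↑(σ j)) ω} with hTneg
  -- probability of a single tuple event
  have hTup : ∀ (m : ℕ) (σ : Fin m → Fin n) (v : Fin m → ℤ) (μv : Fin m → Measure ℝ),
      (∀ j, IsFiniteMeasure (μv j)) →
      (∀ j (B : Set ℝ), MeasurableSet B →
        P {ω | V (↑(σ j)) ω = v j ∧ X (↑(σ j)) ω ∈ B} = μv j B) →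
      P {ω | (∀ j : Fin m, V (↑(σ j)) ω = v j) ∧ StrictMono fun j => X (↑(σ j)) ω}
        = 0 ∨
      P {ω | (∀ j : Fin m, V (↑(σ j)) ω = v j) ∧ StrictMono fun j => X (↑(σ j)) ω}
        = Measure.pi μv (orderedSet m) := by
    intro m σ v μv hfin hfac
    by_cases hinj : Function.Injective fun j => ((σ j : ℕ))
    · right
      haveI := hfin
      exact aux_law P V X hVmeas hXmeas hindep _ hinj v μv hfac
    · left
      rw [Function.not_injective_iff] at hinj
      obtain ⟨j, j', heq, hne⟩ := hinj
      refine measure_mono_null (fun ω hω => absurd hω ?_) (measure_empty)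
      rintro ⟨-, hmono⟩
      have hXeq : X (↑(σ j)) ω = X (↑(σ j')) ω := by rw [heq]
      rcases hne.lt_or_gt with hlt | hlt
      · exact absurd hXeq (ne_of_lt (hmono hlt))
      · exact absurd hXeq.symm (ne_of_lt (hmono hlt))
  -- null bounds for the bad events
  have hTpos_null : ∀ m : ℕ, altMeasure p q m (orderedSet m) = 0 → P (Tpos m) = 0 := by
    intro m halt
    refine measure_iUnion_null fun σ => ?_
    have hfin : ∀ j : Fin m, IsFiniteMeasure (if Even (j : ℕ) then p else q) :=
      fun j => by split <;> infer_instance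
    have hfac : ∀ (j : Fin m) (B : Set ℝ), MeasurableSet B →
        P {ω | V (↑(σ j)) ω = (if Even (j : ℕ) then 1 else -1) ∧ X (↑(σ j)) ω ∈ B}
          = (if Even (j : ℕ) then p else q) B := by
      intro j B hB
      by_cases h : Even (j : ℕ)
      · simp only [if_pos h]; exact (hlaw _ B hB).1
      · simp only [if_neg h]; exact (hlaw _ B hB).2
    rcases hTup m σ _ _ hfin hfac with h | h
    · exact h
    · rw [h]; exact halt
  have hTneg_null : ∀ m : ℕ, altMeasure q p m (orderedSet m) = 0 → P (Tneg m) = 0 := by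
    intro m halt
    refine measure_iUnion_null fun σ => ?_
    have hfin : ∀ j : Fin m, IsFiniteMeasure (if Even (j : ℕ) then q else p) :=
      fun j => by split <;> infer_instance
    have hfac : ∀ (j : Fin m) (B : Set ℝ), MeasurableSet B →
        P {ω | V (↑(σ j)) ω = (if Even (j : ℕ) then -1 else 1) ∧ X (↑(σ j)) ω ∈ B}
          = (if Even (j : ℕ) then q else p) B := by
      intro j B hB
      by_cases h : Even (j : ℕ)
      · simp only [if_pos h]; exact (hlaw _ B hB).2
      · simp only [if_neg h]; exact (hlaw _ B hB).1
    rcases hTup m σ _ _ hfin hfac with h | h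
    · exact h
    · rw [h]; exact halt
  -- almost sure events
  have hV_ae : ∀ᵐ ω ∂P, ∀ i : Fin n, V (↑i) ω = 1 ∨ V (↑i) ω = -1 := by
    rw [ae_all_iff]
    intro i
    have h1 := (hlaw (↑i) Set.univ MeasurableSet.univ).1
    have h2 := (hlaw (↑i) Set.univ MeasurableSet.univ).2
    simp only [Set.mem_univ, and_true] at h1 h2
    have hA1 : MeasurableSet {ω | V (↑i) ω = 1} := (hVmeas (↑i)) (measurableSet_singleton 1)
    have hA2 : MeasurableSet {ω | V (↑i) ω = -1} := (hVmeas (↑i)) (measurableSet_singleton (-1))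
    have hdisj : Disjoint {ω | V (↑i) ω = 1} {ω | V (↑i) ω = -1} := by
      rw [Set.disjoint_left]
      rintro ω (h : V (↑i) ω = 1) (h' : V (↑i) ω = -1)
      rw [h] at h'; exact absurd h' (by decide)
    have hu : P ({ω | V (↑i) ω = 1} ∪ {ω | V (↑i) ω = -1}) = 1 := by
      rw [measure_union hdisj hA2, h1, h2, hprob]
    rw [ae_iff]
    have hset : {ω | ¬(V (↑i) ω = 1 ∨ V (↑i) ω = -1)}
        = ({ω | V (↑i) ω = 1} ∪ {ω | V (↑i) ω = -1})ᶜ := by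
      ext ω; simp [not_or]
    rw [hset, measure_compl (hA1.union hA2) (measure_ne_top _ _), hu, measure_univ, tsub_self]
  have hT_ae : ∀ᵐ ω ∂P, ∀ k : ℕ,
      (altMeasure p q (k+1) (orderedSet (k+1)) = 0 → ω ∉ Tpos (k+1)) ∧
      (altMeasure q p (k+1) (orderedSet (k+1)) = 0 → ω ∉ Tneg (k+1)) := by
    rw [ae_all_iff]
    intro k
    have e1 : ∀ᵐ ω ∂P, altMeasure p q (k+1) (orderedSet (k+1)) = 0 → ω ∉ Tpos (k+1) := by
      by_cases h : altMeasure p q (k+1) (orderedSet (k+1)) = 0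
      · filter_upwards [measure_eq_zero_iff_ae_notMem.mp (hTpos_null (k+1) h)] with ω hω
        exact fun _ => hω
      · filter_upwards with ω
        exact fun hh => absurd hh h
    have e2 : ∀ᵐ ω ∂P, altMeasure q p (k+1) (orderedSet (k+1)) = 0 → ω ∉ Tneg (k+1) := by
      by_cases h : altMeasure q p (k+1) (orderedSet (k+1)) = 0
      · filter_upwards [measure_eq_zero_iff_ae_notMem.mp (hTneg_null (k+1) h)] with ω hω
        exact fun _ => hω
      · filter_upwards with ω
        exact fun hh => absurd hh h
    exact e1.and e2
  -- conclusion
  filter_upwards [hV_ae, hT_ae] with ω hgood hT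
  rw [hν ω hgood]
  set s := (ρ 1 ω).toSignedMeasure - (ρ (-1) ω).toSignedMeasure with hs
  haveI ha : IsFiniteMeasure s.toJordanDecomposition.posPart :=
    s.toJordanDecomposition.posPart_finite
  haveI hb : IsFiniteMeasure s.toJordanDecomposition.negPart :=
    s.toJordanDecomposition.negPart_finite
  -- support facts
  have hasupp : s.toJordanDecomposition.posPart (A 1 ω)ᶜ = 0 :=
    le_antisymm (le_trans (aux_jordan_pos (hAmeas 1 ω).compl) (le_of_eq (hρA 1 ω))) (zero_le)
  have hbsupp : s.toJordanDecomposition.negPart (A (-1) ω)ᶜ = 0 :=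
    le_antisymm (le_trans (aux_jordan_neg (hAmeas (-1) ω).compl)
      (le_of_eq (hρA (-1) ω))) (zero_le)
  rw [sigmaCross, sigmaPair, sigmaPair]
  refine iSup_le fun k => iSup_le fun hcond => ?_
  by_cases hc : 0 < altMeasure p q (k+1) (orderedSet (k+1)) ∨
      0 < altMeasure q p (k+1) (orderedSet (k+1))
  · exact le_iSup_of_le k (le_iSup_of_le hc le_rfl)
  · exfalso
    push_neg at hc
    obtain ⟨hc1, hc2⟩ := hc
    rw [le_zero_iff] at hc1 hc2
    have hnot_pos := (hT k).1 hc1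
    have hnot_neg := (hT k).2 hc2
    -- both alternating measures of the Jordan parts vanish
    have hzero_pos : altMeasure s.toJordanDecomposition.posPart
        s.toJordanDecomposition.negPart (k+1) (orderedSet (k+1)) = 0 := by
      haveI : ∀ j : Fin (k+1), SigmaFinite
          (if Even (j : ℕ) then s.toJordanDecomposition.posPart
            else s.toJordanDecomposition.negPart) := fun j => by split <;> infer_instance
      refine aux_pi_ordered_null _
        (fun j => if Even (j : ℕ) then A 1 ω else A (-1) ω) (fun j => ?_) ?_
      · by_cases h : Even (j : ℕ)
        · simp only [if_pos h]; exact hasupp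
        · simp only [if_neg h]; exact hbsupp
      · rintro ⟨y, hy, hmem⟩
        have h' : ∀ j : Fin (k+1), ∃ i : Fin n,
            V (↑i) ω = (if Even (j : ℕ) then 1 else -1) ∧ X (↑i) ω = y j := by
          intro j
          by_cases h : Even (j : ℕ)
          · have h3 : y j ∈ (if Even (j : ℕ) then A 1 ω else A (-1) ω) := hmem j
            rw [if_pos h] at h3
            obtain ⟨i, hi, hXe⟩ := h3
            exact ⟨i, by rw [if_pos h]; exact hi, hXe⟩
          · have h3 : y j ∈ (if Even (j : ℕ) then A 1 ω else A (-1) ω) := hmem j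
            rw [if_neg h] at h3
            obtain ⟨i, hi, hXe⟩ := h3
            exact ⟨i, by rw [if_neg h]; exact hi, hXe⟩
        choose σ h1 h2 using h'
        refine hnot_pos (Set.mem_iUnion.2 ⟨σ, h1, ?_⟩)
        have : (fun j => X (↑(σ j)) ω) = y := funext h2
        rw [this]; exact hy
    have hzero_neg : altMeasure s.toJordanDecomposition.negPart
        s.toJordanDecomposition.posPart (k+1) (orderedSet (k+1)) = 0 := by
      haveI : ∀ j : Fin (k+1), SigmaFinite
          (if Even (j : ℕ) then s.toJordanDecomposition.negPart
            else s.toJordanDecomposition.posPart) := fun j => by split <;> infer_instance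
      refine aux_pi_ordered_null _
        (fun j => if Even (j : ℕ) then A (-1) ω else A 1 ω) (fun j => ?_) ?_
      · by_cases h : Even (j : ℕ)
        · simp only [if_pos h]; exact hbsupp
        · simp only [if_neg h]; exact hasupp
      · rintro ⟨y, hy, hmem⟩
        have h' : ∀ j : Fin (k+1), ∃ i : Fin n,
            V (↑i) ω = (if Even (j : ℕ) then -1 else 1) ∧ X (↑i) ω = y j := by
          intro j
          by_cases h : Even (j : ℕ)
          · have h3 : y j ∈ (if Even (j : ℕ) then A (-1) ω else A 1 ω) := hmem j
            rw [if_pos h] at h3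
            obtain ⟨i, hi, hXe⟩ := h3
            exact ⟨i, by rw [if_pos h]; exact hi, hXe⟩
          · have h3 : y j ∈ (if Even (j : ℕ) then A (-1) ω else A 1 ω) := hmem j
            rw [if_neg h] at h3
            obtain ⟨i, hi, hXe⟩ := h3
            exact ⟨i, by rw [if_neg h]; exact hi, hXe⟩
        choose σ h1 h2 using h'
        refine hnot_neg (Set.mem_iUnion.2 ⟨σ, h1, ?_⟩)
        have : (fun j => X (↑(σ j)) ω) = y := funext h2
        rw [this]; exact hy
    rcases hcond with h | h
    · rw [hzero_pos] at h; exact lt_irrefl _ h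
    · rw [hzero_neg] at h; exact lt_irrefl _ h
end

section
/- There exists a Feller (space-time) Markov semigroup whose associated process is not a diffusion and whose transition kernels strictly increase the number of zero-crossings of some finite signed measure: namely, for the space-time process on ℝ₊ × ℝ where the spatial component is a continuous-time simple random walk that waits an Exp(1) time and then jumps ±1 with probability 1/2 each, and for the measure μ = δ₀ − δ_{1/2}, one has Σ(μ) = 1 while Σ(μQ_t) = ∞ for every t > 0, where Q_t is the time-t transition kernel. -/
open MeasureTheory ENNReal

open MeasureTheory in
/-- Law at time `m` of the discrete simple random walk on ℝ started at `0`. -/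
noncomputable def walkDist : ℕ → Measure ℝ
  | 0 => Measure.dirac 0
  | (m + 1) => (walkDist m).bind
      (fun y => (1/2 : ENNReal) • Measure.dirac (y + 1) + (1/2 : ENNReal) • Measure.dirac (y - 1))

open MeasureTheory in
/-- Time-`t` transition kernel of the continuous-time simple random walk: wait `Exp(1)` times
between `±1` jumps, i.e. `Q_t(x,·) = ∑ₘ e^{-t} tᵐ/m! · (law of x + Sₘ)`. -/
noncomputable def Qrw (t : ℝ) (x : ℝ) : Measure ℝ :=
  Measure.sum (fun m : ℕ =>
    ENNReal.ofReal (Real.exp (-t) * t ^ m / m.factorial) • (walkDist m).map (fun y => x + y))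

/-! ### Auxiliary lemmas -/

noncomputable abbrev rwstep (y : ℝ) : Measure ℝ :=
  (1/2 : ENNReal) • Measure.dirac (y + 1) + (1/2 : ENNReal) • Measure.dirac (y - 1)

lemma measurable_rwstep : Measurable rwstep := by
  apply Measure.measurable_of_measurable_coe
  intro s hs
  simp only [rwstep, Measure.add_apply, Measure.smul_apply, smul_eq_mul,
    Measure.dirac_apply' _ hs]
  exact (((measurable_const.indicator hs).comp (measurable_id.add_const 1)).const_mul _).add
    (((measurable_const.indicator hs).comp (measurable_id.sub_const 1)).const_mul _)

lemma rwstep_univ (y : ℝ) : rwstep y Set.univ = 1 := by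
  simp [rwstep]; exact ENNReal.inv_two_add_inv_two

lemma rwstep_apply (y : ℝ) {s : Set ℝ} (hs : MeasurableSet s) :
    rwstep y s = 1/2 * s.indicator 1 (y+1) + 1/2 * s.indicator 1 (y-1) := by
  simp [rwstep, Measure.dirac_apply' _ hs]

lemma walkDist_succ (m : ℕ) : walkDist (m+1) = (walkDist m).bind rwstep := rfl

lemma walkDist_univ (m : ℕ) : walkDist m Set.univ = 1 := by
  induction m with
  | zero => simp [walkDist]
  | succ m ih =>
    rw [walkDist_succ, Measure.bind_apply MeasurableSet.univ measurable_rwstep.aemeasurable]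
    simp [rwstep_univ, ih]

lemma walkDist_self (m : ℕ) : (2⁻¹ : ℝ≥0∞) ^ m ≤ walkDist m {(m : ℝ)} := by
  induction m with
  | zero => simp [walkDist]
  | succ m ih =>
    rw [walkDist_succ,
      Measure.bind_apply (measurableSet_singleton _) measurable_rwstep.aemeasurable]
    have h1 : (2⁻¹ : ℝ≥0∞) * walkDist m {(m : ℝ)}
        ≤ ∫⁻ y in {(m : ℝ)}, rwstep y {((m+1 : ℕ) : ℝ)} ∂(walkDist m) := by
      rw [lintegral_singleton]
      have : (2⁻¹ : ℝ≥0∞) ≤ rwstep (m : ℝ) {((m+1 : ℕ) : ℝ)} := by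
        rw [rwstep_apply _ (measurableSet_singleton _)]
        have : ((m : ℝ) + 1) ∈ ({((m+1 : ℕ) : ℝ)} : Set ℝ) := by push_cast; simp
        rw [Set.indicator_of_mem this]
        simp only [Pi.one_apply, mul_one, one_div]
        exact le_add_of_le_of_nonneg le_rfl zero_le
      exact mul_le_mul' this le_rfl
    calc (2⁻¹ : ℝ≥0∞) ^ (m+1) = 2⁻¹ * 2⁻¹ ^ m := by ring
    _ ≤ 2⁻¹ * walkDist m {(m : ℝ)} := by exact mul_le_mul' le_rfl ih
    _ ≤ _ := h1.trans (lintegral_mono' Measure.restrict_le_self le_rfl)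

/-- The set of integer points. -/
def intSet : Set ℝ := Set.range (fun k : ℤ => (k : ℝ))

lemma measurableSet_intSet : MeasurableSet intSet :=
  (Set.countable_range _).measurableSet

lemma half_not_int (k j : ℤ) : (k : ℝ) + 1/2 ≠ (j : ℝ) := by
  intro h
  have : ((2*(j-k) : ℤ) : ℝ) = 1 := by push_cast; linarith
  have := (Int.cast_injective (α := ℝ)) (by exact_mod_cast this : ((2*(j-k):ℤ):ℝ) = ((1:ℤ):ℝ))
  omega

lemma walkDist_intSet (m : ℕ) : walkDist m intSetᶜ = 0 := by
  induction m with
  | zero =>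
    rw [walkDist, Measure.dirac_apply' _ measurableSet_intSet.compl]
    have : (0 : ℝ) ∈ intSet := ⟨0, by simp⟩
    simp [Set.indicator_of_notMem, this]
  | succ m ih =>
    rw [walkDist_succ,
      Measure.bind_apply measurableSet_intSet.compl measurable_rwstep.aemeasurable]
    have hmeas : Measurable (fun y => rwstep y intSetᶜ) :=
      (Measure.measurable_coe measurableSet_intSet.compl).comp measurable_rwstep
    rw [lintegral_eq_zero_iff hmeas]
    rw [Filter.EventuallyEq, ae_iff]
    apply measure_mono_null _ ih
    intro y hy
    simp only [Set.mem_setOf_eq] at hy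
    by_contra hyc
    apply hy
    simp only [Set.mem_compl_iff, not_not] at hyc
    obtain ⟨k, rfl⟩ := hyc
    show rwstep _ intSetᶜ = 0
    rw [rwstep_apply _ measurableSet_intSet.compl]
    have h1 : ((k : ℝ) + 1) ∈ intSet := ⟨k+1, by push_cast; ring⟩
    have h2 : ((k : ℝ) - 1) ∈ intSet := ⟨k-1, by push_cast; ring⟩
    rw [Set.indicator_of_notMem (by simpa using h1), Set.indicator_of_notMem (by simpa using h2)]
    simp

lemma walkDist_shift_intSet (m : ℕ) : walkDist m ((fun y => 1/2 + y) ⁻¹' intSet) = 0 := by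
  apply measure_mono_null _ (walkDist_intSet m)
  intro y hy
  simp only [Set.mem_preimage] at hy
  obtain ⟨j, hj⟩ := hy
  intro hyc
  obtain ⟨k, rfl⟩ := hyc
  exact half_not_int k j (by linarith)

lemma Qrw_apply (t x : ℝ) {s : Set ℝ} (hs : MeasurableSet s) :
    Qrw t x s = ∑' m : ℕ, ENNReal.ofReal (Real.exp (-t) * t ^ m / m.factorial) *
      walkDist m ((fun y => x + y) ⁻¹' s) := by
  rw [Qrw, Measure.sum_apply _ hs]
  congr 1
  ext m
  rw [Measure.smul_apply, smul_eq_mul, Measure.map_apply (measurable_const_add x) hs]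

lemma Qrw_univ {t : ℝ} (ht : 0 ≤ t) (x : ℝ) : Qrw t x Set.univ = 1 := by
  rw [Qrw_apply t x MeasurableSet.univ]
  simp only [Set.preimage_univ, walkDist_univ, mul_one]
  have hsum : Summable (fun m : ℕ => Real.exp (-t) * t ^ m / m.factorial) := by
    simpa [mul_div_assoc] using (Real.summable_pow_div_factorial t).mul_left (Real.exp (-t))
  have hnn : ∀ m : ℕ, 0 ≤ Real.exp (-t) * t ^ m / m.factorial := fun m => by positivity
  rw [← ENNReal.ofReal_tsum_of_nonneg hnn hsum]
  have : ∑' m : ℕ, Real.exp (-t) * t ^ m / m.factorial = 1 := by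
    have h1 : ∑' m : ℕ, t ^ m / m.factorial = Real.exp t := by
      rw [Real.exp_eq_exp_ℝ, NormedSpace.exp_eq_tsum_div]
    calc ∑' m : ℕ, Real.exp (-t) * t ^ m / m.factorial
        = Real.exp (-t) * ∑' m : ℕ, t ^ m / m.factorial := by
          rw [← tsum_mul_left]; congr 1; ext m; ring
    _ = 1 := by rw [h1, ← Real.exp_add]; simp
  rw [this, ENNReal.ofReal_one]

lemma Qrw_zero_apply {t : ℝ} (ht : 0 < t) (k : ℕ) : 0 < Qrw t 0 {(k : ℝ)} := by
  rw [Qrw_apply t 0 (measurableSet_singleton _)]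
  have hpre : (fun y => (0:ℝ) + y) ⁻¹' {(k : ℝ)} = {(k : ℝ)} := by
    ext y; simp
  rw [hpre]
  refine lt_of_lt_of_le ?_ (ENNReal.le_tsum k)
  apply ENNReal.mul_pos
  · simp only [ne_eq, ENNReal.ofReal_eq_zero, not_le]
    exact div_pos (mul_pos (Real.exp_pos _) (pow_pos ht _)) (by exact_mod_cast k.factorial_pos)
  · exact (lt_of_lt_of_le (ENNReal.pow_pos (ENNReal.inv_pos.mpr ENNReal.ofNat_ne_top) k) (walkDist_self k)).ne'

lemma Qrw_half_apply {t : ℝ} (ht : 0 < t) (k : ℕ) : 0 < Qrw t (1/2) {(k : ℝ) + 1/2} := by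
  rw [Qrw_apply t (1/2) (measurableSet_singleton _)]
  have hpre : (fun y => (1/2:ℝ) + y) ⁻¹' {(k : ℝ) + 1/2} = {(k : ℝ)} := by
    ext y; constructor <;> (intro h; simp only [Set.mem_preimage, Set.mem_singleton_iff] at *) <;>
      linarith
  rw [hpre]
  refine lt_of_lt_of_le ?_ (ENNReal.le_tsum k)
  apply ENNReal.mul_pos
  · simp only [ne_eq, ENNReal.ofReal_eq_zero, not_le]
    exact div_pos (mul_pos (Real.exp_pos _) (pow_pos ht _)) (by exact_mod_cast k.factorial_pos)
  · exact (lt_of_lt_of_le (ENNReal.pow_pos (ENNReal.inv_pos.mpr ENNReal.ofNat_ne_top) k) (walkDist_self k)).ne'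

lemma Qrw_zero_intSet {t : ℝ} : Qrw t 0 intSetᶜ = 0 := by
  rw [Qrw_apply t 0 measurableSet_intSet.compl]
  have : (fun y => (0:ℝ) + y) ⁻¹' intSetᶜ = intSetᶜ := by ext y; simp
  rw [this]
  simp [walkDist_intSet]

lemma Qrw_half_intSet {t : ℝ} : Qrw t (1/2) intSet = 0 := by
  rw [Qrw_apply t (1/2) measurableSet_intSet]
  simp only [walkDist_shift_intSet, mul_zero, tsum_zero]

/-- Pi measure of alternating diracs vanishes on ordered sets of dimension ≥ 3. -/
lemma alt_dirac_zero (v w : ℝ) (n : ℕ) (hn : 2 ≤ n) :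
    altMeasure (Measure.dirac v) (Measure.dirac w) (n+1) (orderedSet (n+1)) = 0 := by
  set i2 : Fin (n+1) := ⟨2, by omega⟩ with hi2
  set A0 : Set (Fin (n+1) → ℝ) :=
    Set.univ.pi (fun j => if j = (0 : Fin (n+1)) then ({v}ᶜ : Set ℝ) else Set.univ) with hA0
  set A2 : Set (Fin (n+1) → ℝ) :=
    Set.univ.pi (fun j => if j = i2 then ({v}ᶜ : Set ℝ) else Set.univ) with hA2
  have hzero : ∀ (i0 : Fin (n+1)), Even (i0 : ℕ) →
      altMeasure (Measure.dirac v) (Measure.dirac w) (n+1)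
        (Set.univ.pi (fun j => if j = i0 then ({v}ᶜ : Set ℝ) else Set.univ)) = 0 := by
    intro i0 hi0
    haveI : ∀ i : Fin (n+1),
        SigmaFinite ((fun i : Fin (n+1) => if Even (i:ℕ) then Measure.dirac v
          else Measure.dirac w) i) := fun i => by dsimp only; split <;> infer_instance
    rw [altMeasure, Measure.pi_pi]
    apply Finset.prod_eq_zero (Finset.mem_univ i0)
    rw [if_pos rfl, if_pos hi0]
    simp [Measure.dirac_apply' _ (measurableSet_singleton v).compl]
  apply measure_mono_null _ (measure_union_null (hzero 0 (by simp)) (hzero i2 (by simp [hi2])))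
  intro x hx
  have h02 : x 0 < x i2 := hx (by simp [hi2, Fin.lt_def])
  rcases ne_or_eq (x 0) v with h | h
  · left
    intro j _
    by_cases hj : j = 0 <;> simp [hj, h]
  · right
    intro j _
    by_cases hj : j = i2 <;> simp [hj]
    rw [← h] at *
    exact (h02).ne'

/-- Positivity of the alternating product measure on ordered sets via a strictly
monotone point with positive masses. -/
lemma alt_pos (p q : Measure ℝ) [IsProbabilityMeasure p] [IsProbabilityMeasure q]
    (n : ℕ) (c : Fin n → ℝ) (hc : StrictMono c)
    (hm : ∀ i : Fin n, 0 < (if Even (i : ℕ) then p else q) {c i}) :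
    0 < altMeasure p q n (orderedSet n) := by
  have hsub : ({c} : Set (Fin n → ℝ)) ⊆ orderedSet n := by
    rintro x rfl; exact hc
  haveI : ∀ i : Fin n, SigmaFinite ((fun i : Fin n => if Even (i:ℕ) then p else q) i) :=
    fun i => by dsimp only; split <;> infer_instance
  refine lt_of_lt_of_le ?_ (measure_mono hsub)
  rw [← Set.univ_pi_singleton c, altMeasure, Measure.pi_pi]
  rw [CanonicallyOrderedAdd.prod_pos]
  intro i _
  exact hm i

/-- Counterexample: the continuous-time simple random walk semigroup (not a diffusion) does not
reduce zero-crossings.  Its kernels `Q_t` are Markov, and for `μ = δ₀ - δ_{1/2}` one has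
`Σ(μ) = 1` while `μQ_t` has Jordan decomposition `(Q_t(0,·), Q_t(1/2,·))` (mutually singular)
with `Σ(μQ_t) = ∞` for every `t > 0`. -/
theorem stmt19 :
    (∀ t : ℝ, 0 ≤ t → ∀ x : ℝ, Qrw t x Set.univ = 1) ∧
    sigmaCross ((Measure.dirac (0 : ℝ)).toSignedMeasure -
      (Measure.dirac (1/2 : ℝ)).toSignedMeasure) = 1 ∧
    (∀ t : ℝ, 0 < t →
      (Qrw t 0) ⟂ₘ (Qrw t (1/2)) ∧ sigmaPair (Qrw t 0) (Qrw t (1/2)) = ⊤) := by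
  refine ⟨fun t ht x => Qrw_univ ht x, ?_, ?_⟩
  · -- Σ(μ) = 1
    have hsing : Measure.dirac (0:ℝ) ⟂ₘ Measure.dirac (1/2:ℝ) := by
      refine ⟨({0}ᶜ : Set ℝ), (measurableSet_singleton _).compl, ?_, ?_⟩
      · simp [Measure.dirac_apply' _ (measurableSet_singleton (0:ℝ)).compl]
      · rw [compl_compl]
        rw [Measure.dirac_apply' _ (measurableSet_singleton (0:ℝ))]
        norm_num
    set j : JordanDecomposition ℝ :=
      ⟨Measure.dirac (0:ℝ), Measure.dirac (1/2:ℝ), hsing⟩ with hj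
    have hJD : ((Measure.dirac (0 : ℝ)).toSignedMeasure -
        (Measure.dirac (1/2 : ℝ)).toSignedMeasure).toJordanDecomposition = j := by
      have : (Measure.dirac (0 : ℝ)).toSignedMeasure -
          (Measure.dirac (1/2 : ℝ)).toSignedMeasure = j.toSignedMeasure := rfl
      rw [this, JordanDecomposition.toJordanDecomposition_toSignedMeasure]
    rw [sigmaCross, hJD]
    show sigmaPair (Measure.dirac (0:ℝ)) (Measure.dirac (1/2:ℝ)) = 1
    apply le_antisymm
    · rw [sigmaPair]
      apply iSup₂_le
      intro n hn
      by_contra hle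
      push_neg at hle
      have hn2 : 2 ≤ n := by
        rcases n with _ | _ | n
        · simp at hle
        · exact absurd hle (by simp)
        · omega
      rcases hn with h | h
      · rw [alt_dirac_zero 0 (1/2) n hn2] at h; exact lt_irrefl _ h
      · rw [alt_dirac_zero (1/2) 0 n hn2] at h; exact lt_irrefl _ h
    · have hpos : 0 < altMeasure (Measure.dirac (0:ℝ)) (Measure.dirac (1/2:ℝ)) 2
          (orderedSet 2) := by
        apply alt_pos _ _ 2 (fun i => if (i : ℕ) = 0 then (0:ℝ) else 1/2)
        · intro i j hij
          fin_cases i <;> fin_cases j <;> simp_all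
        · intro i
          fin_cases i <;> simp
      calc (1 : ℕ∞) = (1 : ℕ) := by norm_cast
      _ ≤ _ := le_iSup₂ (f := fun (n : ℕ) (_ : 0 < altMeasure (Measure.dirac (0:ℝ))
            (Measure.dirac (1/2:ℝ)) (n+1) (orderedSet (n+1)) ∨
            0 < altMeasure (Measure.dirac (1/2:ℝ)) (Measure.dirac (0:ℝ)) (n+1)
            (orderedSet (n+1))) => (n : ℕ∞)) 1 (Or.inl hpos)
  · intro t ht
    haveI h0 : IsProbabilityMeasure (Qrw t 0) := ⟨Qrw_univ ht.le 0⟩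
    haveI h12 : IsProbabilityMeasure (Qrw t (1/2)) := ⟨Qrw_univ ht.le (1/2)⟩
    constructor
    · exact ⟨intSetᶜ, measurableSet_intSet.compl, Qrw_zero_intSet,
        by rw [compl_compl]; exact Qrw_half_intSet⟩
    · have hmass : ∀ i : ℕ, 0 < (if Even i then Qrw t 0 else Qrw t (1/2)) {(i:ℝ)/2} := by
        intro i
        rcases Nat.even_or_odd i with he | ho
        · rw [if_pos he]
          obtain ⟨k, hk⟩ := he
          have : ((i:ℝ)/2) = (k : ℝ) := by subst hk; push_cast; ring
          rw [this]
          exact Qrw_zero_apply ht k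
        · rw [if_neg (Nat.not_even_iff_odd.mpr ho)]
          obtain ⟨k, hk⟩ := ho
          have : ((i:ℝ)/2) = (k : ℝ) + 1/2 := by subst hk; push_cast; ring
          rw [this]
          exact Qrw_half_apply ht k
      have hcond : ∀ n : ℕ, 0 < altMeasure (Qrw t 0) (Qrw t (1/2)) (n+1)
          (orderedSet (n+1)) := by
        intro n
        apply alt_pos _ _ (n+1) (fun i : Fin (n+1) => ((i:ℕ):ℝ)/2)
        · intro i j hij
          have : ((i:ℕ):ℝ) < ((j:ℕ):ℝ) := by exact_mod_cast hij
          linarith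
        · intro i; exact hmass i
      rw [sigmaPair, eq_top_iff, ← ENat.iSup_natCast]
      apply iSup_le
      intro n
      exact le_iSup₂ (f := fun (n : ℕ) (_ : 0 < altMeasure (Qrw t 0) (Qrw t (1/2)) (n+1)
          (orderedSet (n+1)) ∨ 0 < altMeasure (Qrw t (1/2)) (Qrw t 0) (n+1)
          (orderedSet (n+1))) => (n : ℕ∞)) n (Or.inl (hcond n))
end
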